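/- arXiv:2008.04462 — 7 statements merged into one kernel-verified Lean document; each statement's English description precedes it below -/
import Mathlib

section
/- Let X be a metric space, x₀ ∈ X, and let γ : X → X be a bijective isometry. Write |γ|_X = d(γx₀, x₀) and let |γ|_{X,∞} = lim_{n→∞} d(γⁿx₀, x₀)/n be the stable translation length. Then liminf_{n→∞} (γⁿx₀ · γ⁻¹x₀)_{x₀} ≤ ½(|γ|_X − |γ|_{X,∞}) ≤ limsup_{n→∞} (γⁿx₀ · γ⁻¹x₀)_{x₀}. -/
open Filter

private lemma aux_ge {a : ℕ → ℝ} {L m : ℝ}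
    (hL : Tendsto (fun n : ℕ => a n / n) atTop (nhds L))
    (N : ℕ) (h : ∀ n, N ≤ n → a n + m ≤ a (n + 1)) : m ≤ L := by
  have key : ∀ k : ℕ, a N + k * m ≤ a (k + N) := by
    intro k
    induction k with
    | zero => simp
    | succ k ih =>
      have h2 := h (k + N) (Nat.le_add_left _ _)
      push_cast
      have : k + N + 1 = k + 1 + N := by omega
      rw [← this]
      nlinarith
  have h1 : Tendsto (fun k : ℕ => a (k + N) / ((k + N : ℕ) : ℝ)) atTop (nhds L) := by
    simpa [Function.comp_def] using hL.comp (tendsto_add_atTop_nat N)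
  have h0 : Tendsto (fun k : ℕ => (a N - N * m) / ((k + N : ℕ) : ℝ) + m) atTop (nhds m) := by
    have hc : Tendsto (fun k : ℕ => (a N - N * m) / ((k + N : ℕ) : ℝ)) atTop (nhds 0) := by
      simpa [Function.comp_def] using (tendsto_const_div_atTop_nhds_zero_nat (a N - N * m)).comp
        (tendsto_add_atTop_nat N)
    simpa using hc.add tendsto_const_nhds
  refine le_of_tendsto_of_tendsto h0 h1 ?_
  filter_upwards [eventually_gt_atTop 0] with k hk
  have hpos : (0 : ℝ) < ((k + N : ℕ) : ℝ) := by positivity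
  have heq : (a N - N * m) / ((k + N : ℕ) : ℝ) + m = (a N + k * m) / ((k + N : ℕ) : ℝ) := by
    field_simp
    push_cast
    ring
  rw [heq]
  gcongr
  exact key k

private lemma aux_le {a : ℕ → ℝ} {L m : ℝ}
    (hL : Tendsto (fun n : ℕ => a n / n) atTop (nhds L))
    (N : ℕ) (h : ∀ n, N ≤ n → a (n + 1) ≤ a n + m) : L ≤ m := by
  have hL' : Tendsto (fun n : ℕ => (-a n) / n) atTop (nhds (-L)) := by
    have := hL.neg
    simpa [neg_div] using this
  have := aux_ge (a := fun n => -a n) (m := -m) hL' N (fun n hn => by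
    have := h n hn; linarith)
  linarith

/-- For a bijective isometry `γ` of a metric space `X` with basepoint `x₀`,
with `|γ|_X = d(γ x₀, x₀)` and stable translation length `L = lim d(γⁿ x₀, x₀)/n`, one has
`liminf (γⁿx₀ · γ⁻¹x₀)_{x₀} ≤ ½(|γ|_X − L) ≤ limsup (γⁿx₀ · γ⁻¹x₀)_{x₀}`,
where `(x · y)_w = ½(d(x,w) + d(y,w) − d(x,y))` is the Gromov product. -/
theorem gromov_product_liminf_limsup_stable_length
    {X : Type*} [MetricSpace X] (x₀ : X) (γ : X ≃ᵢ X) (L : ℝ)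
    (hL : Tendsto (fun n : ℕ => dist ((⇑γ)^[n] x₀) x₀ / n) atTop (nhds L)) :
    liminf (fun n : ℕ =>
        (dist ((⇑γ)^[n] x₀) x₀ + dist (γ.symm x₀) x₀ - dist ((⇑γ)^[n] x₀) (γ.symm x₀)) / 2)
        atTop ≤ (dist (γ x₀) x₀ - L) / 2 ∧
      (dist (γ x₀) x₀ - L) / 2 ≤ limsup (fun n : ℕ =>
        (dist ((⇑γ)^[n] x₀) x₀ + dist (γ.symm x₀) x₀ - dist ((⇑γ)^[n] x₀) (γ.symm x₀)) / 2)
        atTop := by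
  set a : ℕ → ℝ := fun n => dist ((⇑γ)^[n] x₀) x₀ with ha
  set g : ℝ := dist (γ x₀) x₀ with hg
  have hsymm : dist (γ.symm x₀) x₀ = g := by
    calc dist (γ.symm x₀) x₀ = dist (γ (γ.symm x₀)) (γ x₀) := (γ.isometry.dist_eq _ _).symm
      _ = dist x₀ (γ x₀) := by simp
      _ = g := dist_comm _ _
  have hstep : ∀ n : ℕ, dist ((⇑γ)^[n] x₀) (γ.symm x₀) = a (n + 1) := by
    intro n
    rw [← γ.isometry.dist_eq ((⇑γ)^[n] x₀) (γ.symm x₀)]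
    simp [ha, Function.iterate_succ_apply']
  set p : ℕ → ℝ := fun n =>
    (dist ((⇑γ)^[n] x₀) x₀ + dist (γ.symm x₀) x₀ - dist ((⇑γ)^[n] x₀) (γ.symm x₀)) / 2 with hp
  have hpeq : ∀ n, p n = (a n + g - a (n + 1)) / 2 := fun n => by
    simp [hp, hsymm, hstep n]; rfl
  -- triangle bounds
  have htri1 : ∀ n, a (n + 1) ≤ a n + g := by
    intro n
    have := dist_triangle ((⇑γ)^[n] x₀) x₀ (γ.symm x₀)
    rw [hstep n, dist_comm x₀ (γ.symm x₀), hsymm] at this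
    exact this
  have htri2 : ∀ n, a n ≤ a (n + 1) + g := by
    intro n
    have := dist_triangle ((⇑γ)^[n] x₀) (γ.symm x₀) x₀
    rw [hstep n, hsymm] at this
    exact this
  have hub : ∀ n, p n ≤ g := fun n => by rw [hpeq]; have := htri2 n; linarith
  have hlb : ∀ n, 0 ≤ p n := fun n => by rw [hpeq]; have := htri1 n; linarith
  have hbdd_above : IsBoundedUnder (· ≤ ·) atTop p := isBoundedUnder_of ⟨g, hub⟩
  have hbdd_below : IsBoundedUnder (· ≥ ·) atTop p := isBoundedUnder_of ⟨0, hlb⟩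
  constructor
  · by_contra hcon
    push_neg at hcon
    obtain ⟨c, hc1, hc2⟩ := exists_between hcon
    have hev : ∀ᶠ n in atTop, c < p n :=
      eventually_lt_of_lt_liminf hc2 hbdd_below
    obtain ⟨N, hN⟩ := hev.exists_forall_of_atTop
    have hm : L ≤ g - 2 * c := by
      refine aux_le hL N fun n hn => ?_
      have := hN n hn
      rw [hpeq] at this
      linarith
    linarith
  · by_contra hcon
    push_neg at hcon
    obtain ⟨c, hc1, hc2⟩ := exists_between hcon
    have hev : ∀ᶠ n in atTop, p n < c :=
      eventually_lt_of_limsup_lt hc1 hbdd_above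
    obtain ⟨N, hN⟩ := hev.exists_forall_of_atTop
    have hm : g - 2 * c ≤ L := by
      refine aux_ge hL N fun n hn => ?_
      have := hN n hn
      rw [hpeq] at this
      linarith
    linarith
end

section
/- Let X be a metric space and δ ≥ 0 be such that (x · y)_w ≥ min((x · z)_w, (z · y)_w) − δ for all w, x, y, z ∈ X. Let x₀ ∈ X and let γ : X → X be a bijective isometry such that (γⁿx₀ · γᵐx₀)_{x₀} → ∞ as n, m → ∞. Then limsup_{n→∞} (γⁿx₀ · γ⁻¹x₀)_{x₀} ≤ ½(d(γx₀,x₀) − |γ|_{X,∞}) + 2δ and liminf_{n→∞} (γⁿx₀ · γ⁻¹x₀)_{x₀} ≥ ½(d(γx₀,x₀) − |γ|_{X,∞}) − 2δ. -/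
open Filter

private lemma aux_lim_le (a : ℕ → ℝ) (L hi : ℝ) (N : ℕ)
    (hL : Tendsto (fun n : ℕ => a n / n) atTop (nhds L))
    (h1 : ∀ k, N ≤ k → a (k + 1) - a k ≤ hi) : L ≤ hi := by
  have key : ∀ n, N ≤ n → a n ≤ a N + ((n : ℝ) - N) * hi := by
    intro n hn
    induction n, hn using Nat.le_induction with
    | base => simp
    | succ n hn ih =>
      have := h1 n hn
      push_cast
      nlinarith
  have hg : Tendsto (fun n : ℕ => a N / n + hi - (N * hi) / n) atTop (nhds hi) := by
    have t1 : Tendsto (fun n : ℕ => a N / n) atTop (nhds 0) :=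
      tendsto_const_div_atTop_nhds_zero_nat _
    have t2 : Tendsto (fun n : ℕ => ((N : ℝ) * hi) / n) atTop (nhds 0) :=
      tendsto_const_div_atTop_nhds_zero_nat _
    have tc : Tendsto (fun _ : ℕ => hi) atTop (nhds hi) := tendsto_const_nhds
    have := (t1.add tc).sub t2
    simpa using this
  have hle : ∀ᶠ n : ℕ in atTop, a n / n ≤ a N / n + hi - (N * hi) / n := by
    filter_upwards [eventually_ge_atTop (max N 1)] with n hn
    have hn1 : (1 : ℕ) ≤ n := le_trans (le_max_right _ _) hn
    have hnN : N ≤ n := le_trans (le_max_left _ _) hn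
    have hnpos : (0 : ℝ) < n := by exact_mod_cast hn1
    rw [div_le_iff₀ hnpos]
    have h2 : (a N / ↑n + hi - ↑N * hi / ↑n) * ↑n = a N + ((n : ℝ) - N) * hi := by
      field_simp
      ring
    rw [h2]
    exact key n hnN
  exact le_of_tendsto_of_tendsto hL hg hle

private lemma aux_le_lim (a : ℕ → ℝ) (L lo : ℝ) (N : ℕ)
    (hL : Tendsto (fun n : ℕ => a n / n) atTop (nhds L))
    (h1 : ∀ k, N ≤ k → lo ≤ a (k + 1) - a k) : lo ≤ L := by
  have hL' : Tendsto (fun n : ℕ => (-a n) / n) atTop (nhds (-L)) := by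
    simpa [neg_div] using hL.neg
  have := aux_lim_le (fun n => -a n) (-L) (-lo) N hL'
    (by intro k hk; have := h1 k hk; linarith)
  linarith

/-- Let `X` be a `δ`-hyperbolic metric space (in the Gromov-product sense),
`x₀ ∈ X`, and `γ` a bijective isometry of `X` such that `(γⁿx₀ · γᵐx₀)_{x₀} → ∞` as
`n, m → ∞`.  Then, with `L = |γ|_{X,∞}` the stable translation length,
`limsup (γⁿx₀ · γ⁻¹x₀)_{x₀} ≤ ½(d(γx₀,x₀) − L) + 2δ` and
`liminf (γⁿx₀ · γ⁻¹x₀)_{x₀} ≥ ½(d(γx₀,x₀) − L) − 2δ`. -/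
theorem gromov_product_stable_length_hyperbolic
    {X : Type*} [MetricSpace X] (δ : ℝ) (hδ : 0 ≤ δ)
    (hhyp : ∀ w x y z : X,
      min ((dist x w + dist z w - dist x z) / 2) ((dist z w + dist y w - dist z y) / 2) - δ ≤
        (dist x w + dist y w - dist x y) / 2)
    (x₀ : X) (γ : X ≃ᵢ X) (L : ℝ)
    (hL : Tendsto (fun n : ℕ => dist ((⇑γ)^[n] x₀) x₀ / n) atTop (nhds L))
    (hdiv : ∀ R : ℝ, 0 < R → ∃ N : ℕ, ∀ n m : ℕ, N ≤ n → N ≤ m →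
      R ≤ (dist ((⇑γ)^[n] x₀) x₀ + dist ((⇑γ)^[m] x₀) x₀ -
            dist ((⇑γ)^[n] x₀) ((⇑γ)^[m] x₀)) / 2) :
    limsup (fun n : ℕ =>
        (dist ((⇑γ)^[n] x₀) x₀ + dist (γ.symm x₀) x₀ - dist ((⇑γ)^[n] x₀) (γ.symm x₀)) / 2)
        atTop ≤ (dist (γ x₀) x₀ - L) / 2 + 2 * δ ∧
      (dist (γ x₀) x₀ - L) / 2 - 2 * δ ≤ liminf (fun n : ℕ =>
        (dist ((⇑γ)^[n] x₀) x₀ + dist (γ.symm x₀) x₀ - dist ((⇑γ)^[n] x₀) (γ.symm x₀)) / 2)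
        atTop := by
  set a : ℕ → ℝ := fun n => dist ((⇑γ)^[n] x₀) x₀ with ha
  set D : ℝ := dist (γ x₀) x₀ with hD
  set F : ℕ → ℝ := fun n : ℕ =>
    (dist ((⇑γ)^[n] x₀) x₀ + dist (γ.symm x₀) x₀ - dist ((⇑γ)^[n] x₀) (γ.symm x₀)) / 2 with hF
  -- basic distance identities
  have hsymm : dist (γ.symm x₀) x₀ = D := by
    rw [hD, ← γ.dist_eq (γ.symm x₀) x₀, γ.apply_symm_apply, dist_comm]
  have hnext : ∀ n : ℕ, dist ((⇑γ)^[n] x₀) (γ.symm x₀) = a (n + 1) := by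
    intro n
    rw [show dist ((⇑γ)^[n] x₀) (γ.symm x₀)
        = dist (γ ((⇑γ)^[n] x₀)) (γ (γ.symm x₀)) from (γ.dist_eq _ _).symm,
      γ.apply_symm_apply, ← Function.iterate_succ_apply' (⇑γ) n x₀]
  have hFa : ∀ n : ℕ, F n = (a n + D - a (n + 1)) / 2 := by
    intro n
    rw [hF]
    simp only
    rw [hsymm, hnext]
  have hD0 : 0 ≤ D := by rw [hD]; exact dist_nonneg
  -- F is bounded between 0 and D
  have hFub : ∀ n : ℕ, F n ≤ D := by
    intro n
    have htri : a n ≤ a (n + 1) + D := by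
      have := dist_triangle ((⇑γ)^[n] x₀) (γ.symm x₀) x₀
      rw [hnext, hsymm] at this
      simpa [ha] using this
    rw [hFa n]; linarith
  have hFlb : ∀ n : ℕ, 0 ≤ F n := by
    intro n
    have htri : a (n + 1) ≤ a n + D := by
      have := dist_triangle ((⇑γ)^[n] x₀) x₀ (γ.symm x₀)
      rw [hnext, dist_comm x₀ (γ.symm x₀), hsymm] at this
      simpa [ha] using this
    rw [hFa n]; linarith
  -- get the divergence threshold
  obtain ⟨N, hN⟩ := hdiv (D + 1) (by linarith)
  -- all Gromov products past N are within δ of each other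
  have hclose : ∀ n m : ℕ, N ≤ n → N ≤ m → F m - δ ≤ F n := by
    intro n m hn hm
    have h := hhyp x₀ (γ.symm x₀) ((⇑γ)^[n] x₀) ((⇑γ)^[m] x₀)
    have hmid := hN m n hm hn
    rw [dist_comm (γ.symm x₀) ((⇑γ)^[m] x₀)] at h
    rw [dist_comm (γ.symm x₀) ((⇑γ)^[n] x₀)] at h
    have e1 : (dist (γ.symm x₀) x₀ + dist ((⇑γ)^[m] x₀) x₀
        - dist ((⇑γ)^[m] x₀) (γ.symm x₀)) / 2 = F m := by
      rw [hF]; ring_nf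
    have e2 : (dist (γ.symm x₀) x₀ + dist ((⇑γ)^[n] x₀) x₀
        - dist ((⇑γ)^[n] x₀) (γ.symm x₀)) / 2 = F n := by
      rw [hF]; ring_nf
    rw [e1, e2] at h
    have hFmD : F m ≤ D := hFub m
    have hminq : min (F m) ((dist ((⇑γ)^[m] x₀) x₀ + dist ((⇑γ)^[n] x₀) x₀ -
        dist ((⇑γ)^[m] x₀) ((⇑γ)^[n] x₀)) / 2) = F m := by
      apply min_eq_left
      linarith
    rw [hminq] at h
    linarith
  -- the increments of a are eventually within 2δ of D - 2 F N
  have hinc_le : ∀ k, N ≤ k → a (k + 1) - a k ≤ D - 2 * F N + 2 * δ := by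
    intro k hk
    have h1 := hclose k N hk le_rfl
    have := hFa k
    linarith
  have hinc_ge : ∀ k, N ≤ k → D - 2 * F N - 2 * δ ≤ a (k + 1) - a k := by
    intro k hk
    have h1 := hclose N k le_rfl hk
    have := hFa k
    linarith
  -- hence L is within 2δ of D - 2 F N
  have hLle : L ≤ D - 2 * F N + 2 * δ := aux_lim_le a L _ N hL hinc_le
  have hLge : D - 2 * F N - 2 * δ ≤ L := aux_le_lim a L _ N hL hinc_ge
  -- eventual bounds for F
  have hub : ∀ᶠ n : ℕ in atTop, F n ≤ (D - L) / 2 + 2 * δ := by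
    filter_upwards [eventually_ge_atTop N] with n hn
    have h1 := hclose N n le_rfl hn
    linarith
  have hlb : ∀ᶠ n : ℕ in atTop, (D - L) / 2 - 2 * δ ≤ F n := by
    filter_upwards [eventually_ge_atTop N] with n hn
    have h1 := hclose n N hn le_rfl
    linarith
  constructor
  · exact limsup_le_of_le (isCoboundedUnder_le_of_le atTop hFlb) hub
  · exact le_liminf_of_le (isCoboundedUnder_ge_of_le atTop hFub) hlb
end

section
/- Let d ≥ 2 and let g ∈ GL(d, ℝ) admit a singular value decomposition g = k D k', where k, k' are orthogonal d × d matrices and D is diagonal with entries D₁₁ ≥ D₂₂ ≥ … ≥ D_dd > 0. Suppose v ∈ ℝ^d is a unit vector with g v = λ v for some real number λ ≠ 0. Then 1 − ⟨v, k e₁⟩² ≤ (D₂₂ / |λ|)². In particular, the sine of the angle between the eigenline [v] and the Cartan attractor [k e₁] of g is at most σ₂(g)/|λ|. -/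
open Matrix

/-- Let `d ≥ 2` and let `g ∈ GL(d, ℝ)` have a singular value decomposition
`g = k D k'` with `k, k'` orthogonal and `D` diagonal with decreasing positive entries.
If `v` is a unit eigenvector of `g` with eigenvalue `λ ≠ 0`, then
`1 − ⟨v, k e₁⟩² ≤ (D₂₂/|λ|)²`; i.e. the sine of the angle between the eigenline `[v]`
and the Cartan attractor `[k e₁]` of `g` is at most `σ₂(g)/|λ|`. -/
theorem sine_angle_eigenline_cartan_attractor
    (d : ℕ) (hd : 2 ≤ d)
    (g k k' : Matrix (Fin d) (Fin d) ℝ)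
    (hk : k * kᵀ = 1) (hk' : k' * k'ᵀ = 1)
    (D : Fin d → ℝ) (hDpos : ∀ i, 0 < D i)
    (hDanti : ∀ i j : Fin d, i ≤ j → D j ≤ D i)
    (hg : g = k * Matrix.diagonal D * k')
    (v : Fin d → ℝ) (hv : v ⬝ᵥ v = 1)
    (l : ℝ) (hl : l ≠ 0) (heig : g.mulVec v = l • v) :
    1 - (v ⬝ᵥ fun i => k i ⟨0, by omega⟩) ^ 2 ≤ (D ⟨1, by omega⟩ / |l|) ^ 2 := by
  have hkT : kᵀ * k = 1 := mul_eq_one_comm.mp hk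
  have hk'T : k'ᵀ * k' = 1 := mul_eq_one_comm.mp hk'
  set i0 : Fin d := ⟨0, by omega⟩ with hi0
  set i1 : Fin d := ⟨1, by omega⟩ with hi1
  set c : Fin d → ℝ := kᵀ.mulVec v with hc
  set u : Fin d → ℝ := k'.mulVec v with hu
  have hcn : c ⬝ᵥ c = 1 := by
    rw [hc, Matrix.dotProduct_mulVec, Matrix.vecMul_transpose, Matrix.mulVec_mulVec, hk,
      Matrix.one_mulVec, hv]
  have hun : u ⬝ᵥ u = 1 := by
    rw [hu, Matrix.dotProduct_mulVec, ← Matrix.mulVec_transpose, Matrix.mulVec_mulVec, hk'T,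
      Matrix.one_mulVec, hv]
  have key : ∀ i, D i * u i = l * c i := by
    intro i
    have h1 : kᵀ.mulVec (g.mulVec v) = kᵀ.mulVec (l • v) := by rw [heig]
    rw [Matrix.mulVec_mulVec, hg, ← Matrix.mul_assoc, ← Matrix.mul_assoc, hkT, Matrix.one_mul,
      Matrix.mulVec_smul, ← Matrix.mulVec_mulVec] at h1
    have h2 := congrFun h1 i
    simpa [Matrix.mulVec_diagonal, hc, hu] using h2
  have hcsq : ∀ i, c i ^ 2 = (D i) ^ 2 * (u i) ^ 2 / l ^ 2 := by
    intro i
    have : c i = D i * u i / l := by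
      field_simp
      linarith [key i]
    rw [this]
    ring
  have hc0 : (v ⬝ᵥ fun i => k i i0) = c i0 := by
    simp [hc, Matrix.mulVec, dotProduct, Matrix.transpose_apply, mul_comm]
  have hsum : ∑ i, c i ^ 2 = 1 := by
    rw [← hcn]
    simp [dotProduct, sq]
  have hsumu : ∑ i, u i ^ 2 = 1 := by
    rw [← hun]
    simp [dotProduct, sq]
  have hR : (D i1 / |l|) ^ 2 = D i1 ^ 2 / l ^ 2 := by
    rw [div_pow, sq_abs]
  rw [hc0, hR]
  have hsplit : 1 - c i0 ^ 2 = ∑ i ∈ Finset.univ.erase i0, c i ^ 2 := by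
    rw [← hsum, ← Finset.add_sum_erase _ _ (Finset.mem_univ i0)]
    ring
  rw [hsplit]
  have hl2 : (0:ℝ) < l ^ 2 := by positivity
  calc ∑ i ∈ Finset.univ.erase i0, c i ^ 2
      ≤ ∑ i ∈ Finset.univ.erase i0, D i1 ^ 2 / l ^ 2 * u i ^ 2 := by
        apply Finset.sum_le_sum
        intro i hi
        have hi0' : i ≠ i0 := Finset.ne_of_mem_erase hi
        have hvne : i.val ≠ 0 := fun h => hi0' (Fin.ext h)
        have hle : D i ≤ D i1 := by
          apply hDanti
          rw [Fin.le_def]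
          simp only [hi1]
          omega
        have hsq : D i ^ 2 ≤ D i1 ^ 2 := by
          have := hDpos i
          nlinarith
        rw [hcsq i]
        rw [div_mul_eq_mul_div]
        gcongr
    _ ≤ D i1 ^ 2 / l ^ 2 * ∑ i, u i ^ 2 := by
        rw [← Finset.mul_sum]
        apply mul_le_mul_of_nonneg_left ?_ (by positivity)
        apply Finset.sum_le_sum_of_subset_of_nonneg (Finset.erase_subset _ _)
        intro i _ _
        positivity
    _ = D i1 ^ 2 / l ^ 2 := by rw [hsumu, mul_one]
end

section
/- Let Γ be a group generated by a finite set S, with word length |·|_Γ. Let f : ℕ → (0, ∞) be a Floyd function: f is summable, non-increasing, and there exists m ∈ (0, 1] with f(k+1) ≥ m·f(k) for all k. For g, h ∈ Γ define d_f(g, h) as the infimum, over all finite chains g = x₀, x₁, …, xₙ = h with xᵢ⁻¹xᵢ₊₁ ∈ S ∪ S⁻¹ for each i, of Σᵢ f(max(|xᵢ|_Γ, |xᵢ₊₁|_Γ)). Let ρ : Γ → SL(d, ℝ) (d ≥ 2) be a homomorphism for which there exists K > 0 with σ₂(ρ(γ))/σ₁(ρ(γ)) ≤ K·f(|γ|_Γ)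 for all γ ∈ Γ. Then there exist a constant C > 0 and a finite subset A of Γ such that for all g, h ∈ Γ ∖ A and all unit vectors u, w ∈ ℝ^d with ρ(g)ρ(g)ᵀ u = σ₁(ρ(g))² u and ρ(h)ρ(h)ᵀ w = σ₁(ρ(h))² w, one has √(1 − ⟨u, w⟩²) ≤ C · d_f(g, h). -/
open Matrix Filter

/-- The list of singular values of a real square matrix, in decreasing order
(the square roots of the eigenvalues of `Aᴴ * A`). -/
noncomputable def svalList {n : Type*} [Fintype n] [DecidableEq n]
    (A : Matrix n n ℝ) : List ℝ :=
  (Multiset.sort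
    (Finset.univ.val.map fun i =>
      Real.sqrt ((Matrix.isHermitian_conjTranspose_mul_self A).eigenvalues i)) (· ≤ ·)).reverse

/-- `sval j A` is the `j`-th largest singular value `σⱼ(A)` of `A` (1-indexed). -/
noncomputable def sval {n : Type*} [Fintype n] [DecidableEq n]
    (j : ℕ) (A : Matrix n n ℝ) : ℝ :=
  (svalList A).getD (j - 1) 0

/-- The word length of `γ` with respect to a generating set `S`. -/
noncomputable def wordLength {Γ : Type*} [Group Γ] (S : Set Γ) (γ : Γ) : ℕ :=
  sInf {n : ℕ | ∃ l : List Γ, l.length = n ∧ (∀ x ∈ l, x ∈ S ∨ x⁻¹ ∈ S) ∧ l.prod = γ}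

/-- The Floyd distance on `Γ` associated to the Floyd function `f`: the infimum over
finite chains `g = x₀, x₁, …, xₙ = h` (consecutive points differing by a generator) of
`Σᵢ f(max(|xᵢ|, |xᵢ₊₁|))`. -/
noncomputable def floydDist {Γ : Type*} [Group Γ] (S : Set Γ) (f : ℕ → ℝ) (g h : Γ) : ℝ :=
  sInf {r : ℝ | ∃ (n : ℕ) (x : ℕ → Γ), x 0 = g ∧ x n = h ∧
    (∀ i < n, (x i)⁻¹ * x (i + 1) ∈ S ∨ ((x i)⁻¹ * x (i + 1))⁻¹ ∈ S) ∧
    r = ∑ i ∈ Finset.range n, f (max (wordLength S (x i)) (wordLength S (x (i + 1))))}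

namespace FloydAux

/-! ### descending sorted list lemmas -/

lemma desc_le_head {l : List ℝ} (h : l.Pairwise (· ≥ ·)) {x : ℝ} (hx : x ∈ l) :
    x ≤ l.getD 0 0 := by
  cases l with
  | nil => simp at hx
  | cons a t =>
    rcases List.mem_cons.1 hx with rfl | hx
    · simp
    · simpa using List.rel_of_pairwise_cons h hx

lemma desc_getD_zero_mem {l : List ℝ} (hl : 1 ≤ l.length) : l.getD 0 0 ∈ l := by
  cases l with
  | nil => simp at hl
  | cons a t => simp

lemma desc_getD_one_mem {l : List ℝ} (hl : 2 ≤ l.length) : l.getD 1 0 ∈ l := by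
  match l, hl with
  | a :: b :: t, _ => simp

lemma desc_countP_le_one {l : List ℝ} (h : l.Pairwise (· ≥ ·)) (hl : 2 ≤ l.length) :
    l.countP (fun x => decide (l.getD 1 0 < x)) ≤ 1 := by
  match l, h, hl with
  | a :: b :: t, h, _ =>
    have htail : ∀ x ∈ b :: t, x ≤ b := by
      intro x hx
      rcases List.mem_cons.1 hx with rfl | hx
      · exact le_refl x
      · exact List.rel_of_pairwise_cons (List.Pairwise.of_cons h) hx
    have h0 : (b :: t).countP (fun x => decide ((a :: b :: t).getD 1 0 < x)) = 0 := by
      rw [List.countP_eq_zero]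
      intro x hx
      simpa using not_lt.2 (htail x hx)
    rw [List.countP_cons, h0]
    split <;> norm_num

variable {n : Type*} [Fintype n] [DecidableEq n]

/-- `μ A` : the eigenvalues of `Aᴴ * A`. -/
noncomputable abbrev mu (A : Matrix n n ℝ) : n → ℝ :=
  (Matrix.isHermitian_conjTranspose_mul_self A).eigenvalues

lemma svalList_coe (A : Matrix n n ℝ) :
    (svalList A : Multiset ℝ) = Finset.univ.val.map fun i => Real.sqrt (mu A i) := by
  unfold svalList
  rw [Multiset.coe_reverse, Multiset.sort_eq]

lemma mem_svalList {A : Matrix n n ℝ} {x : ℝ} :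
    x ∈ svalList A ↔ ∃ i, Real.sqrt (mu A i) = x := by
  rw [← Multiset.mem_coe, svalList_coe]
  simp

lemma svalList_sorted (A : Matrix n n ℝ) : (svalList A).Pairwise (· ≥ ·) := by
  unfold svalList
  have h : List.Pairwise (fun a b : ℝ => a ≤ b)
      (Multiset.sort (Finset.univ.val.map fun i => Real.sqrt (mu A i)) (· ≤ ·)) :=
    Multiset.pairwise_sort _ _
  exact List.pairwise_reverse.mpr (h.imp fun hab => hab)

lemma svalList_length (A : Matrix n n ℝ) : (svalList A).length = Fintype.card n := by
  simp [svalList]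

lemma sval_one_def (A : Matrix n n ℝ) : sval 1 A = (svalList A).getD 0 0 := rfl

lemma sval_two_def (A : Matrix n n ℝ) : sval 2 A = (svalList A).getD 1 0 := rfl

lemma sqrt_mu_le_sval_one (A : Matrix n n ℝ) (i : n) :
    Real.sqrt (mu A i) ≤ sval 1 A :=
  desc_le_head (svalList_sorted A) (mem_svalList.2 ⟨i, rfl⟩)

lemma mu_nonneg (A : Matrix n n ℝ) (i : n) : 0 ≤ mu A i :=
  Matrix.eigenvalues_conjTranspose_mul_self_nonneg A i

lemma mu_le_sq_sval_one (A : Matrix n n ℝ) (i : n) : mu A i ≤ (sval 1 A) ^ 2 := by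
  have h := sqrt_mu_le_sval_one A i
  have h0 : (0:ℝ) ≤ Real.sqrt (mu A i) := Real.sqrt_nonneg _
  calc mu A i = (Real.sqrt (mu A i)) ^ 2 := (Real.sq_sqrt (mu_nonneg A i)).symm
    _ ≤ (sval 1 A) ^ 2 := by nlinarith

lemma exists_sqrt_mu_eq_sval_one (A : Matrix n n ℝ) [Nonempty n] :
    ∃ i, Real.sqrt (mu A i) = sval 1 A := by
  apply mem_svalList.1
  apply desc_getD_zero_mem
  rw [svalList_length]
  exact Fintype.card_pos

lemma sval_one_nonneg (A : Matrix n n ℝ) [Nonempty n] : 0 ≤ sval 1 A := by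
  obtain ⟨i, hi⟩ := exists_sqrt_mu_eq_sval_one A
  exact hi ▸ Real.sqrt_nonneg _

lemma sval_two_mem (A : Matrix n n ℝ) (h2 : 2 ≤ Fintype.card n) :
    sval 2 A ∈ svalList A := by
  apply desc_getD_one_mem; rw [svalList_length]; exact h2

lemma sval_two_nonneg (A : Matrix n n ℝ) (h2 : 2 ≤ Fintype.card n) : 0 ≤ sval 2 A := by
  obtain ⟨i, hi⟩ := mem_svalList.1 (sval_two_mem A h2)
  exact hi ▸ Real.sqrt_nonneg _

lemma sval_two_le_sval_one (A : Matrix n n ℝ) (h2 : 2 ≤ Fintype.card n) :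
    sval 2 A ≤ sval 1 A :=
  desc_le_head (svalList_sorted A) (sval_two_mem A h2)

lemma countP_sval_two_lt (A : Matrix n n ℝ) (h2 : 2 ≤ Fintype.card n) :
    Multiset.countP (fun x => sval 2 A < x)
      (Finset.univ.val.map fun i => Real.sqrt (mu A i)) ≤ 1 := by
  rw [← svalList_coe, Multiset.coe_countP]
  have := desc_countP_le_one (svalList_sorted A) (by rw [svalList_length]; exact h2)
  rw [sval_two_def]
  convert this using 2


/-! ### Eigen expansion lemmas -/

section Eigen

lemma inner_eq_dot (x y : EuclideanSpace ℝ n) :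
    (inner ℝ x y : ℝ) = (WithLp.equiv 2 (n → ℝ) x) ⬝ᵥ (WithLp.equiv 2 (n → ℝ) y) := by
  simp [PiLp.inner_apply, dotProduct, RCLike.inner_apply, starRingEnd_apply, mul_comm]

variable {M : Matrix n n ℝ} (hM : M.IsHermitian)

/-- the `i`-th eigenvector, as a plain function -/
noncomputable def evec (i : n) : n → ℝ := ⇑(hM.eigenvectorBasis i)

lemma dot_expansion (x y : n → ℝ) :
    x ⬝ᵥ y = ∑ i, (evec hM i ⬝ᵥ x) * (evec hM i ⬝ᵥ y) := by
  have h := hM.eigenvectorBasis.sum_inner_mul_inner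
    ((WithLp.equiv 2 (n → ℝ)).symm x) ((WithLp.equiv 2 (n → ℝ)).symm y)
  rw [inner_eq_dot] at h
  simp only [inner_eq_dot] at h
  have hx : WithLp.equiv 2 (n → ℝ) ((WithLp.equiv 2 (n → ℝ)).symm x) = x :=
    (WithLp.equiv 2 (n → ℝ)).apply_symm_apply x
  have hy : WithLp.equiv 2 (n → ℝ) ((WithLp.equiv 2 (n → ℝ)).symm y) = y :=
    (WithLp.equiv 2 (n → ℝ)).apply_symm_apply y
  rw [hx, hy] at h
  rw [← h]
  congr 1
  funext i
  have hb : WithLp.equiv 2 (n → ℝ) (hM.eigenvectorBasis i) = evec hM i := rfl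
  rw [hb]
  rw [dotProduct_comm (evec hM i) x]

lemma mulVec_evec (i : n) : M *ᵥ evec hM i = hM.eigenvalues i • evec hM i :=
  hM.mulVec_eigenvectorBasis i

lemma transpose_eq_self (h : M.IsHermitian) : Mᵀ = M := by
  rw [← Matrix.conjTranspose_eq_transpose_of_trivial]
  exact h

lemma evec_dot_mulVec (i : n) (v : n → ℝ) :
    evec hM i ⬝ᵥ (M *ᵥ v) = hM.eigenvalues i * (evec hM i ⬝ᵥ v) := by
  rw [dotProduct_mulVec, ← Matrix.mulVec_transpose, transpose_eq_self hM,
    mulVec_evec hM i, smul_dotProduct]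
  rfl

lemma quad_expansion (v : n → ℝ) :
    v ⬝ᵥ (M *ᵥ v) = ∑ i, hM.eigenvalues i * (evec hM i ⬝ᵥ v) ^ 2 := by
  rw [dot_expansion hM v (M *ᵥ v)]
  congr 1
  funext i
  rw [evec_dot_mulVec hM i v]
  ring

lemma eigen_coeff_eq_zero {v : n → ℝ} {t : ℝ} (hv : M *ᵥ v = t • v) {i : n}
    (hne : hM.eigenvalues i ≠ t) : evec hM i ⬝ᵥ v = 0 := by
  have h1 : evec hM i ⬝ᵥ (M *ᵥ v) = hM.eigenvalues i * (evec hM i ⬝ᵥ v) :=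
    evec_dot_mulVec hM i v
  rw [hv, dotProduct_smul] at h1
  have : (hM.eigenvalues i - t) * (evec hM i ⬝ᵥ v) = 0 := by
    have : t * (evec hM i ⬝ᵥ v) = hM.eigenvalues i * (evec hM i ⬝ᵥ v) := h1
    linarith [this]
  rcases mul_eq_zero.1 this with h | h
  · exact absurd (by linarith : hM.eigenvalues i = t) hne
  · exact h

lemma exists_eigenvalue_of_mulVec_eq {v : n → ℝ} {t : ℝ} (hv : M *ᵥ v = t • v)
    (hv0 : v ≠ 0) : ∃ i, hM.eigenvalues i = t := by
  by_contra hc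
  push_neg at hc
  have h0 : ∀ i, evec hM i ⬝ᵥ v = 0 := fun i => eigen_coeff_eq_zero hM hv (hc i)
  have : v ⬝ᵥ v = 0 := by
    rw [dot_expansion hM v v]
    simp [h0]
  exact hv0 (dotProduct_self_eq_zero.1 this)

end Eigen


/-! ### Charpoly and eigenvalue multisets -/

section Charpoly
open Polynomial

lemma charmatrix_eq {R : Type*} [CommRing R] (M : Matrix n n R) :
    charmatrix M = Matrix.diagonal (fun _ => (X : R[X])) - M.map C := by
  ext i j
  rw [Matrix.charmatrix_apply, Matrix.sub_apply, Matrix.map_apply]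

lemma charpoly_mul_comm {R : Type*} [CommRing R] (A B : Matrix n n R)
    (hdet : IsUnit A.det) : (A * B).charpoly = (B * A).charpoly := by
  classical
  set A' := A.map (C : R →+* R[X]) with hA'
  set B' := B.map (C : R →+* R[X]) with hB'
  have hdetA' : IsUnit A'.det := by
    have h := RingHom.map_det (C : R →+* R[X]) A
    rw [RingHom.mapMatrix_apply] at h
    rw [hA', ← h]
    exact hdet.map C
  have hD : ∀ P : Matrix n n R[X],
      Matrix.diagonal (fun _ => (X : R[X])) * P = P * Matrix.diagonal (fun _ => (X : R[X])) := by
    intro P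
    ext i j
    rw [Matrix.diagonal_mul, Matrix.mul_diagonal, mul_comm]
  have key : A' * (Matrix.diagonal (fun _ => (X : R[X])) - B' * A') * A'⁻¹ =
      Matrix.diagonal (fun _ => (X : R[X])) - A' * B' := by
    rw [Matrix.mul_sub, Matrix.sub_mul]
    congr 1
    · rw [← hD A', Matrix.mul_assoc, Matrix.mul_nonsing_inv _ hdetA', Matrix.mul_one]
    · rw [Matrix.mul_assoc, Matrix.mul_assoc, Matrix.mul_nonsing_inv _ hdetA', Matrix.mul_one]
  have hmap : (A * B).map (C : R →+* R[X]) = A' * B' := by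
    rw [hA', hB']; exact Matrix.map_mul
  have hmap2 : (B * A).map (C : R →+* R[X]) = B' * A' := by
    rw [hA', hB']; exact Matrix.map_mul
  unfold Matrix.charpoly
  rw [charmatrix_eq, charmatrix_eq, hmap, hmap2, ← key,
    Matrix.det_conj ((Matrix.isUnit_iff_isUnit_det _).2 hdetA')]

lemma charpoly_diagonal {R : Type*} [CommRing R] (v : n → R) :
    (Matrix.diagonal v).charpoly = ∏ i, (X - C (v i)) := by
  classical
  have h : charmatrix (Matrix.diagonal v) = Matrix.diagonal (fun i => X - C (v i)) := by
    ext i j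
    by_cases hij : i = j
    · subst hij
      simp [Matrix.charmatrix_apply, Matrix.diagonal_apply]
    · simp [Matrix.charmatrix_apply, Matrix.diagonal_apply, hij]
  unfold Matrix.charpoly
  rw [h, Matrix.det_diagonal]

lemma charpoly_hermitian {M : Matrix n n ℝ} (hM : M.IsHermitian) :
    M.charpoly = ∏ i, (X - C (hM.eigenvalues i)) := by
  have hU := hM.eigenvectorUnitary.2
  have hstar : (star (hM.eigenvectorUnitary : Matrix n n ℝ)) *
      (hM.eigenvectorUnitary : Matrix n n ℝ) = 1 := by
    exact (Matrix.mem_unitaryGroup_iff').mp hM.eigenvectorUnitary.2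
  have hdetU : IsUnit (hM.eigenvectorUnitary : Matrix n n ℝ).det := by
    apply (Matrix.isUnit_iff_isUnit_det _).1
    exact ⟨⟨(hM.eigenvectorUnitary : Matrix n n ℝ), star (hM.eigenvectorUnitary : Matrix n n ℝ),
      (Matrix.mem_unitaryGroup_iff).mp hM.eigenvectorUnitary.2, hstar⟩, rfl⟩
  have hsp := hM.spectral_theorem
  have hdiag : Matrix.diagonal ((RCLike.ofReal : ℝ → ℝ) ∘ hM.eigenvalues) =
      Matrix.diagonal hM.eigenvalues := by
    rw [RCLike.ofReal_real_eq_id, Function.id_comp]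
  calc M.charpoly
      = ((hM.eigenvectorUnitary : Matrix n n ℝ) * (Matrix.diagonal hM.eigenvalues
          * star (hM.eigenvectorUnitary : Matrix n n ℝ))).charpoly := by
        rw [← Matrix.mul_assoc, ← hdiag]
        conv_lhs => rw [hsp, Unitary.conjStarAlgAut_apply]
    _ = ((Matrix.diagonal hM.eigenvalues * star (hM.eigenvectorUnitary : Matrix n n ℝ))
          * (hM.eigenvectorUnitary : Matrix n n ℝ)).charpoly := charpoly_mul_comm _ _ hdetU
    _ = (Matrix.diagonal hM.eigenvalues).charpoly := by
        rw [Matrix.mul_assoc, hstar, Matrix.mul_one]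
    _ = ∏ i, (X - C (hM.eigenvalues i)) := charpoly_diagonal _

lemma roots_charpoly_hermitian {M : Matrix n n ℝ} (hM : M.IsHermitian) :
    M.charpoly.roots = Finset.univ.val.map hM.eigenvalues := by
  rw [charpoly_hermitian hM, Finset.prod_eq_multiset_prod]
  have : Multiset.map (fun i => X - C (hM.eigenvalues i)) Finset.univ.val =
      Multiset.map (fun a => X - C a) (Finset.univ.val.map hM.eigenvalues) := by
    rw [Multiset.map_map]
    rfl
  rw [this, roots_multiset_prod_X_sub_C]

lemma eigen_multiset_mul_comm (A : Matrix n n ℝ) (hdet : IsUnit A.det)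
    (hM : (A * Aᵀ).IsHermitian) :
    Finset.univ.val.map hM.eigenvalues = Finset.univ.val.map (mu A) := by
  have hAH : Aᴴ = Aᵀ := Matrix.conjTranspose_eq_transpose_of_trivial A
  have h1 : (A * Aᴴ).charpoly = (Aᴴ * A).charpoly := charpoly_mul_comm A Aᴴ hdet
  rw [hAH] at h1
  rw [← roots_charpoly_hermitian hM, ← roots_charpoly_hermitian
    (Matrix.isHermitian_conjTranspose_mul_self A), h1, hAH]

lemma nu_nonneg (A : Matrix n n ℝ) (hM : (A * Aᵀ).IsHermitian) (i : n) :
    0 ≤ hM.eigenvalues i := by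
  have hp : (A * Aᵀ).PosSemidef := by
    rw [← Matrix.conjTranspose_eq_transpose_of_trivial]
    exact Matrix.posSemidef_self_mul_conjTranspose A
  exact hp.eigenvalues_nonneg i

lemma exists_mu_of_nu (A : Matrix n n ℝ) (hdet : IsUnit A.det)
    (hM : (A * Aᵀ).IsHermitian) (i : n) : ∃ j, mu A j = hM.eigenvalues i := by
  have h := eigen_multiset_mul_comm A hdet hM
  have : hM.eigenvalues i ∈ Finset.univ.val.map (mu A) := by
    rw [← h]
    exact Multiset.mem_map_of_mem _ (Finset.mem_univ_val i)
  obtain ⟨j, _, hj⟩ := Multiset.mem_map.1 this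
  exact ⟨j, hj⟩

lemma sqrt_nu_le_sval_one (A : Matrix n n ℝ) (hdet : IsUnit A.det)
    (hM : (A * Aᵀ).IsHermitian) (i : n) :
    Real.sqrt (hM.eigenvalues i) ≤ sval 1 A := by
  obtain ⟨j, hj⟩ := exists_mu_of_nu A hdet hM i
  rw [← hj]
  exact sqrt_mu_le_sval_one A j

lemma nu_le_sq_sval_one (A : Matrix n n ℝ) (hdet : IsUnit A.det)
    (hM : (A * Aᵀ).IsHermitian) (i : n) : hM.eigenvalues i ≤ (sval 1 A) ^ 2 := by
  obtain ⟨j, hj⟩ := exists_mu_of_nu A hdet hM i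
  rw [← hj]
  exact mu_le_sq_sval_one A j

lemma exists_nu_eq_sq_sval_one (A : Matrix n n ℝ) [Nonempty n] (hdet : IsUnit A.det)
    (hM : (A * Aᵀ).IsHermitian) : ∃ i, hM.eigenvalues i = (sval 1 A) ^ 2 := by
  obtain ⟨j, hj⟩ := exists_sqrt_mu_eq_sval_one A
  have hj2 : mu A j = (sval 1 A) ^ 2 := by
    rw [← hj, Real.sq_sqrt (mu_nonneg A j)]
  have : mu A j ∈ Finset.univ.val.map hM.eigenvalues := by
    rw [eigen_multiset_mul_comm A hdet hM]
    exact Multiset.mem_map_of_mem _ (Finset.mem_univ_val j)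
  obtain ⟨i, _, hi⟩ := Multiset.mem_map.1 this
  exact ⟨i, by rw [hi, hj2]⟩

lemma countP_nu (A : Matrix n n ℝ) (hdet : IsUnit A.det) (hM : (A * Aᵀ).IsHermitian)
    (h2 : 2 ≤ Fintype.card n) :
    Multiset.countP (fun x => sval 2 A < x)
      (Finset.univ.val.map fun i => Real.sqrt (hM.eigenvalues i)) ≤ 1 := by
  have h : (Finset.univ.val.map fun i => Real.sqrt (hM.eigenvalues i)) =
      (Finset.univ.val.map fun i => Real.sqrt (mu A i)) := by
    have h1 : (Finset.univ.val.map fun i => Real.sqrt (hM.eigenvalues i)) =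
        Multiset.map Real.sqrt (Finset.univ.val.map hM.eigenvalues) := by
      rw [Multiset.map_map]; rfl
    have h2' : (Finset.univ.val.map fun i => Real.sqrt (mu A i)) =
        Multiset.map Real.sqrt (Finset.univ.val.map (mu A)) := by
      rw [Multiset.map_map]; rfl
    rw [h1, h2', eigen_multiset_mul_comm A hdet hM]
  rw [h]
  exact countP_sval_two_lt A h2

end Charpoly


/-! ### Rayleigh and Courant-type bounds -/

section Core

lemma isHermitian_mul_transpose_self' (A : Matrix n n ℝ) : (A * Aᵀ).IsHermitian := by
  rw [← Matrix.conjTranspose_eq_transpose_of_trivial]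
  exact Matrix.isHermitian_mul_conjTranspose_self A

lemma mulVec_dot_key (A : Matrix n n ℝ) (v : n → ℝ) :
    (A *ᵥ v) ⬝ᵥ (A *ᵥ v) = v ⬝ᵥ ((Aᴴ * A) *ᵥ v) := by
  rw [dotProduct_mulVec, ← Matrix.mulVec_transpose, Matrix.mulVec_mulVec,
    dotProduct_comm, Matrix.conjTranspose_eq_transpose_of_trivial]

lemma mulVec_dot_le (A : Matrix n n ℝ) (v : n → ℝ) :
    (A *ᵥ v) ⬝ᵥ (A *ᵥ v) ≤ (sval 1 A) ^ 2 * (v ⬝ᵥ v) := by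
  set hN := Matrix.isHermitian_conjTranspose_mul_self A with hNdef
  rw [mulVec_dot_key A v, quad_expansion hN v]
  have hvv : v ⬝ᵥ v = ∑ i, (evec hN i ⬝ᵥ v) ^ 2 := by
    rw [dot_expansion hN v v]
    congr 1; funext i; ring
  rw [hvv, Finset.mul_sum]
  apply Finset.sum_le_sum
  intro i _
  exact mul_le_mul_of_nonneg_right (mu_le_sq_sval_one A i) (sq_nonneg _)

lemma evec_dot_self (M : Matrix n n ℝ) (hM : M.IsHermitian) (i : n) :
    evec hM i ⬝ᵥ evec hM i = 1 := by
  have h := inner_eq_dot (hM.eigenvectorBasis i) (hM.eigenvectorBasis i)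
  have h2 : (inner ℝ (hM.eigenvectorBasis i) (hM.eigenvectorBasis i) : ℝ) =
      ‖hM.eigenvectorBasis i‖ ^ 2 := real_inner_self_eq_norm_sq _
  have h3 : ‖hM.eigenvectorBasis i‖ = 1 := hM.eigenvectorBasis.orthonormal.1 i
  rw [h2, h3] at h
  have he : (WithLp.equiv 2 (n → ℝ)) (hM.eigenvectorBasis i) = evec hM i := rfl
  rw [he] at h
  simpa using h.symm

lemma exists_unit_attains (A : Matrix n n ℝ) [Nonempty n] :
    ∃ v : n → ℝ, v ⬝ᵥ v = 1 ∧ (A *ᵥ v) ⬝ᵥ (A *ᵥ v) = (sval 1 A) ^ 2 := by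
  set hN := Matrix.isHermitian_conjTranspose_mul_self A with hNdef
  obtain ⟨j, hj⟩ := exists_sqrt_mu_eq_sval_one A
  refine ⟨evec hN j, evec_dot_self _ hN j, ?_⟩
  rw [mulVec_dot_key A (evec hN j), mulVec_evec hN j, dotProduct_smul]
  have : mu A j = (sval 1 A) ^ 2 := by rw [← hj, Real.sq_sqrt (mu_nonneg A j)]
  rw [evec_dot_self _ hN j]
  simp only [smul_eq_mul, mul_one]
  exact this

lemma sval_one_pos (A : Matrix n n ℝ) [Nonempty n] (hdet : IsUnit A.det) :
    0 < sval 1 A := by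
  rcases lt_or_eq_of_le (sval_one_nonneg A) with h | h
  · exact h
  · exfalso
    obtain ⟨v, hv1, hv2⟩ := exists_unit_attains A
    rw [← h] at hv2
    norm_num at hv2
    have hAv : A *ᵥ v = 0 := hv2
    have hv0 : v = 0 := by
      have : A⁻¹ *ᵥ (A *ᵥ v) = v := by
        rw [Matrix.mulVec_mulVec, Matrix.nonsing_inv_mul A hdet, Matrix.one_mulVec]
      rw [hAv, Matrix.mulVec_zero] at this
      rw [← this]
    rw [hv0] at hv1
    simp [dotProduct] at hv1

lemma card_filter_nu (A : Matrix n n ℝ) (hdet : IsUnit A.det) (hM : (A * Aᵀ).IsHermitian)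
    (h2 : 2 ≤ Fintype.card n) :
    (Finset.univ.filter (fun i => sval 2 A < Real.sqrt (hM.eigenvalues i))).card ≤ 1 := by
  have h := countP_nu A hdet hM h2
  rw [Multiset.countP_map] at h
  simpa [Finset.card, Finset.filter_val] using h

lemma nu_le_of_ne (A : Matrix n n ℝ) (hdet : IsUnit A.det) (hM : (A * Aᵀ).IsHermitian)
    (h2 : 2 ≤ Fintype.card n) (hlt : sval 2 A < sval 1 A)
    {istar j : n} (histar : hM.eigenvalues istar = (sval 1 A) ^ 2) (hne : j ≠ istar) :
    hM.eigenvalues j ≤ (sval 2 A) ^ 2 := by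
  by_contra hc
  push_neg at hc
  have hj : sval 2 A < Real.sqrt (hM.eigenvalues j) := by
    have h0 : 0 ≤ sval 2 A := sval_two_nonneg A h2
    nlinarith [Real.sq_sqrt (nu_nonneg A hM j), Real.sqrt_nonneg (hM.eigenvalues j)]
  have hi : sval 2 A < Real.sqrt (hM.eigenvalues istar) := by
    rw [histar, Real.sqrt_sq (le_of_lt (lt_of_le_of_lt (sval_two_nonneg A h2) hlt))]
    exact hlt
  have hmem1 : j ∈ Finset.univ.filter (fun i => sval 2 A < Real.sqrt (hM.eigenvalues i)) := by
    simp [hj]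
  have hmem2 : istar ∈ Finset.univ.filter (fun i => sval 2 A < Real.sqrt (hM.eigenvalues i)) := by
    simp [hi]
  have := Finset.card_le_one.1 (card_filter_nu A hdet hM h2) j hmem1 istar hmem2
  exact hne this

lemma courant (A : Matrix n n ℝ) (hdet : IsUnit A.det) (h2 : 2 ≤ Fintype.card n)
    {u y : n → ℝ} (hu1 : u ⬝ᵥ u = 1)
    (hu : (A * Aᵀ) *ᵥ u = (sval 1 A) ^ 2 • u) (hy : y ⬝ᵥ u = 0) :
    y ⬝ᵥ ((A * Aᵀ) *ᵥ y) ≤ (sval 2 A) ^ 2 * (y ⬝ᵥ y) := by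
  have : Nonempty n := Fintype.card_pos_iff.1 (by omega)
  set hM := isHermitian_mul_transpose_self' A with hMdef
  have hyy : y ⬝ᵥ y = ∑ i, (evec hM i ⬝ᵥ y) ^ 2 := by
    rw [dot_expansion hM y y]; congr 1; funext i; ring
  rw [quad_expansion hM y, hyy, Finset.mul_sum]
  by_cases hcase : sval 1 A ≤ sval 2 A
  · apply Finset.sum_le_sum
    intro i _
    have h1 : hM.eigenvalues i ≤ (sval 1 A) ^ 2 := nu_le_sq_sval_one A hdet hM i
    have h2' : (sval 1 A) ^ 2 ≤ (sval 2 A) ^ 2 :=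
      pow_le_pow_left₀ (sval_one_nonneg A) hcase 2
    exact mul_le_mul_of_nonneg_right (le_trans h1 h2') (sq_nonneg _)
  · push_neg at hcase
    have hu0 : u ≠ 0 := by
      intro h; rw [h] at hu1; simp [dotProduct] at hu1
    obtain ⟨istar, histar⟩ := exists_eigenvalue_of_mulVec_eq hM hu hu0
    have hsmall : ∀ j, j ≠ istar → hM.eigenvalues j ≤ (sval 2 A) ^ 2 :=
      fun j hj => nu_le_of_ne A hdet hM h2 hcase histar hj
    have hcoeffu : ∀ j, j ≠ istar → evec hM j ⬝ᵥ u = 0 := by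
      intro j hj
      apply eigen_coeff_eq_zero hM hu
      have := hsmall j hj
      have hs2 : (sval 2 A) ^ 2 < (sval 1 A) ^ 2 :=
        pow_lt_pow_left₀ hcase (sval_two_nonneg A h2) (by norm_num)
      intro hcontra
      rw [hcontra] at this
      linarith
    have hcu : evec hM istar ⬝ᵥ u ≠ 0 := by
      intro hczero
      have : u ⬝ᵥ u = 0 := by
        rw [dot_expansion hM u u]
        apply Finset.sum_eq_zero
        intro i _
        by_cases hi : i = istar
        · rw [hi, hczero]; ring
        · rw [hcoeffu i hi]; ring
      rw [hu1] at this; norm_num at this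
    have hcy : evec hM istar ⬝ᵥ y = 0 := by
      have hexp : u ⬝ᵥ y = (evec hM istar ⬝ᵥ u) * (evec hM istar ⬝ᵥ y) := by
        rw [dot_expansion hM u y]
        rw [Finset.sum_eq_single istar]
        · intro i _ hi
          rw [hcoeffu i hi]; ring
        · intro h; exact absurd (Finset.mem_univ istar) h
      have huy : u ⬝ᵥ y = 0 := by rw [dotProduct_comm]; exact hy
      rw [huy] at hexp
      rcases mul_eq_zero.1 hexp.symm with h | h
      · exact absurd h hcu
      · exact h
    apply Finset.sum_le_sum
    intro i _
    by_cases hi : i = istar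
    · rw [hi, hcy]
      simp
    · exact mul_le_mul_of_nonneg_right (hsmall i hi) (sq_nonneg _)

lemma eigenvector_unique (A : Matrix n n ℝ) (hdet : IsUnit A.det) (h2 : 2 ≤ Fintype.card n)
    (hlt : sval 2 A < sval 1 A) {u w : n → ℝ} (hu1 : u ⬝ᵥ u = 1) (hw1 : w ⬝ᵥ w = 1)
    (hu : (A * Aᵀ) *ᵥ u = (sval 1 A) ^ 2 • u)
    (hw : (A * Aᵀ) *ᵥ w = (sval 1 A) ^ 2 • w) :
    (u ⬝ᵥ w) ^ 2 = 1 := by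
  have : Nonempty n := Fintype.card_pos_iff.1 (by omega)
  set hM := isHermitian_mul_transpose_self' A with hMdef
  have hu0 : u ≠ 0 := by intro h; rw [h] at hu1; simp [dotProduct] at hu1
  obtain ⟨istar, histar⟩ := exists_eigenvalue_of_mulVec_eq hM hu hu0
  have hsmall : ∀ j, j ≠ istar → hM.eigenvalues j ≤ (sval 2 A) ^ 2 :=
    fun j hj => nu_le_of_ne A hdet hM h2 hlt histar hj
  have hne : ∀ j, j ≠ istar → hM.eigenvalues j ≠ (sval 1 A) ^ 2 := by
    intro j hj hcontra
    have := hsmall j hj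
    have hs2 : (sval 2 A) ^ 2 < (sval 1 A) ^ 2 :=
      pow_lt_pow_left₀ hlt (sval_two_nonneg A h2) (by norm_num)
    rw [hcontra] at this
    linarith
  have hcoeffu : ∀ j, j ≠ istar → evec hM j ⬝ᵥ u = 0 :=
    fun j hj => eigen_coeff_eq_zero hM hu (hne j hj)
  have hcoeffw : ∀ j, j ≠ istar → evec hM j ⬝ᵥ w = 0 :=
    fun j hj => eigen_coeff_eq_zero hM hw (hne j hj)
  have hcu2 : (evec hM istar ⬝ᵥ u) ^ 2 = 1 := by
    have := dot_expansion hM u u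
    rw [hu1, Finset.sum_eq_single istar] at this
    · rw [← sq] at this; exact this.symm
    · intro i _ hi; rw [hcoeffu i hi]; ring
    · intro h; exact absurd (Finset.mem_univ istar) h
  have hcw2 : (evec hM istar ⬝ᵥ w) ^ 2 = 1 := by
    have := dot_expansion hM w w
    rw [hw1, Finset.sum_eq_single istar] at this
    · rw [← sq] at this; exact this.symm
    · intro i _ hi; rw [hcoeffw i hi]; ring
    · intro h; exact absurd (Finset.mem_univ istar) h
  have huw : u ⬝ᵥ w = (evec hM istar ⬝ᵥ u) * (evec hM istar ⬝ᵥ w) := by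
    rw [dot_expansion hM u w, Finset.sum_eq_single istar]
    · intro i _ hi; rw [hcoeffu i hi]; ring
    · intro h; exact absurd (Finset.mem_univ istar) h
  rw [huw, mul_pow, hcu2, hcw2]
  norm_num

end Core


/-! ### The one-step estimate -/

section Step

lemma dot_self_nonneg (x : n → ℝ) : 0 ≤ x ⬝ᵥ x :=
  Finset.sum_nonneg fun i _ => mul_self_nonneg (x i)

lemma dot_sq_le (x y : n → ℝ) : (x ⬝ᵥ y) ^ 2 ≤ (x ⬝ᵥ x) * (y ⬝ᵥ y) := by
  have h := Finset.sum_mul_sq_le_sq_mul_sq Finset.univ x y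
  simpa [dotProduct, pow_two] using h

lemma le_of_sq_le_sq' {a b : ℝ} (ha : 0 ≤ a) (hb : 0 ≤ b) (h : a ^ 2 ≤ b ^ 2) : a ≤ b := by
  nlinarith

lemma real_conjTranspose_transpose (M : Matrix n n ℝ) : (Mᵀ)ᴴ = M := by
  rw [Matrix.conjTranspose_eq_transpose_of_trivial, Matrix.transpose_transpose]

lemma step_bound (A B : Matrix n n ℝ) (h2 : 2 ≤ Fintype.card n)
    (hdA : IsUnit A.det) (hdB : IsUnit B.det)
    {u w : n → ℝ} (hu1 : u ⬝ᵥ u = 1) (hw1 : w ⬝ᵥ w = 1)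
    (hu : (A * Aᵀ) *ᵥ u = (sval 1 A) ^ 2 • u)
    (hw : ((A * B) * (A * B)ᵀ) *ᵥ w = (sval 1 (A * B)) ^ 2 • w) :
    Real.sqrt (1 - (u ⬝ᵥ w) ^ 2) ≤
      (sval 2 A / sval 1 A) * (sval 1 B * sval 1 B⁻¹) := by
  have hne : Nonempty n := Fintype.card_pos_iff.1 (by omega)
  have hdAB : IsUnit (A * B).det := by rw [Matrix.det_mul]; exact hdA.mul hdB
  have hdBinv : IsUnit B⁻¹.det := by
    have h1 : B⁻¹.det * B.det = 1 := by
      rw [← Matrix.det_mul, Matrix.nonsing_inv_mul B hdB, Matrix.det_one]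
    exact IsUnit.of_mul_eq_one _ h1
  have hs1A : 0 < sval 1 A := sval_one_pos A hdA
  have hσ' : 0 < sval 1 (A * B) := sval_one_pos (A * B) hdAB
  have hs2A : 0 ≤ sval 2 A := sval_two_nonneg A h2
  have hs1B : 0 ≤ sval 1 B := sval_one_nonneg B
  have hs1Binv : 0 ≤ sval 1 B⁻¹ := sval_one_nonneg B⁻¹
  set y : n → ℝ := w - (u ⬝ᵥ w) • u with ydef
  have hyu : y ⬝ᵥ u = 0 := by
    rw [ydef, sub_dotProduct, smul_dotProduct, smul_eq_mul, hu1,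
      dotProduct_comm w u]
    ring
  have hyy : y ⬝ᵥ y = 1 - (u ⬝ᵥ w) ^ 2 := by
    rw [ydef]
    simp only [sub_dotProduct, dotProduct_sub, smul_dotProduct,
      dotProduct_smul, smul_eq_mul, hu1, hw1, dotProduct_comm w u]
    ring
  have hyw : y ⬝ᵥ w = y ⬝ᵥ y := by
    have h1 : y ⬝ᵥ w - y ⬝ᵥ y = 0 := by
      rw [← dotProduct_sub]
      have h2 : w - y = (u ⬝ᵥ w) • u := by rw [ydef]; abel
      rw [h2, dotProduct_smul, smul_eq_mul, hyu, mul_zero]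
    linarith
  -- the vector z
  set z : n → ℝ := B *ᵥ (Bᵀ *ᵥ (Aᵀ *ᵥ w)) with zdef
  have hprod : (A * B) * (A * B)ᵀ = A * (B * (Bᵀ * Aᵀ)) := by
    rw [Matrix.transpose_mul, Matrix.mul_assoc]
  have hAz : A *ᵥ z = ((A * B) * (A * B)ᵀ) *ᵥ w := by
    rw [zdef, Matrix.mulVec_mulVec, Matrix.mulVec_mulVec, Matrix.mulVec_mulVec, hprod]
    congr 1
    simp only [Matrix.mul_assoc]
  have hkey : (sval 1 (A * B)) ^ 2 * (y ⬝ᵥ y) = (Aᵀ *ᵥ y) ⬝ᵥ z := by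
    have h1 : y ⬝ᵥ (((A * B) * (A * B)ᵀ) *ᵥ w) = (sval 1 (A * B)) ^ 2 * (y ⬝ᵥ y) := by
      rw [hw, dotProduct_smul, smul_eq_mul, hyw]
    have h2 : y ⬝ᵥ (((A * B) * (A * B)ᵀ) *ᵥ w) = (Aᵀ *ᵥ y) ⬝ᵥ z := by
      rw [← hAz, dotProduct_mulVec, ← Matrix.mulVec_transpose]
    rw [← h1, h2]
  -- bound on Aᵀ y
  have hAty : (Aᵀ *ᵥ y) ⬝ᵥ (Aᵀ *ᵥ y) ≤ (sval 2 A) ^ 2 * (y ⬝ᵥ y) := by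
    have h1 : (Aᵀ *ᵥ y) ⬝ᵥ (Aᵀ *ᵥ y) = y ⬝ᵥ ((A * Aᵀ) *ᵥ y) := by
      rw [mulVec_dot_key Aᵀ y, real_conjTranspose_transpose]
    rw [h1]
    exact courant A hdA h2 hu1 hu hyu
  -- bound on z
  have hz : z ⬝ᵥ z ≤ (sval 1 B) ^ 2 * (sval 1 (A * B)) ^ 2 := by
    have h1 : z ⬝ᵥ z ≤ (sval 1 B) ^ 2 * ((Bᵀ *ᵥ (Aᵀ *ᵥ w)) ⬝ᵥ (Bᵀ *ᵥ (Aᵀ *ᵥ w))) :=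
      mulVec_dot_le B _
    have h2 : (Bᵀ *ᵥ (Aᵀ *ᵥ w)) = (A * B)ᵀ *ᵥ w := by
      rw [Matrix.mulVec_mulVec, Matrix.transpose_mul]
    have h3 : ((A * B)ᵀ *ᵥ w) ⬝ᵥ ((A * B)ᵀ *ᵥ w) = (sval 1 (A * B)) ^ 2 := by
      rw [mulVec_dot_key (A * B)ᵀ w, real_conjTranspose_transpose, hw,
        dotProduct_smul, smul_eq_mul, hw1, mul_one]
    rw [h2] at h1
    rw [h3] at h1
    exact h1
  -- combine
  have hq0 : 0 ≤ y ⬝ᵥ y := dot_self_nonneg y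
  have hmain : ((sval 1 (A * B)) ^ 2 * (y ⬝ᵥ y)) ^ 2 ≤
      ((sval 2 A) ^ 2 * (y ⬝ᵥ y)) * ((sval 1 B) ^ 2 * (sval 1 (A * B)) ^ 2) := by
    rw [hkey]
    calc ((Aᵀ *ᵥ y) ⬝ᵥ z) ^ 2 ≤ ((Aᵀ *ᵥ y) ⬝ᵥ (Aᵀ *ᵥ y)) * (z ⬝ᵥ z) := dot_sq_le _ _
      _ ≤ ((sval 2 A) ^ 2 * (y ⬝ᵥ y)) * ((sval 1 B) ^ 2 * (sval 1 (A * B)) ^ 2) := by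
          exact mul_le_mul hAty hz (dot_self_nonneg z) (mul_nonneg (sq_nonneg _) hq0)
  have target1 : Real.sqrt (y ⬝ᵥ y) ≤ sval 2 A * sval 1 B / sval 1 (A * B) := by
    rcases eq_or_lt_of_le hq0 with h0 | hpos
    · rw [← h0, Real.sqrt_zero]
      exact div_nonneg (mul_nonneg hs2A hs1B) (le_of_lt hσ')
    · have hineq : y ⬝ᵥ y ≤ (sval 2 A * sval 1 B / sval 1 (A * B)) ^ 2 := by
        rw [div_pow, le_div_iff₀ (pow_pos hσ' 2)]
        nlinarith [hmain, hpos, pow_pos hσ' 2, mul_pos (pow_pos hσ' 2) hpos]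
      have h := Real.sqrt_le_sqrt hineq
      rwa [Real.sqrt_sq (div_nonneg (mul_nonneg hs2A hs1B) (le_of_lt hσ'))] at h
  -- lower bound on sval 1 (A * B)
  have hlow : sval 1 A ≤ sval 1 (A * B) * sval 1 B⁻¹ := by
    obtain ⟨v, hv1, hv2⟩ := exists_unit_attains A
    have hAv : A *ᵥ v = (A * B) *ᵥ (B⁻¹ *ᵥ v) := by
      rw [Matrix.mulVec_mulVec, Matrix.mul_assoc, Matrix.mul_nonsing_inv B hdB,
        Matrix.mul_one]
    have h1 : (A *ᵥ v) ⬝ᵥ (A *ᵥ v) ≤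
        (sval 1 (A * B)) ^ 2 * ((B⁻¹ *ᵥ v) ⬝ᵥ (B⁻¹ *ᵥ v)) := by
      rw [hAv]; exact mulVec_dot_le (A * B) _
    have h2 : (B⁻¹ *ᵥ v) ⬝ᵥ (B⁻¹ *ᵥ v) ≤ (sval 1 B⁻¹) ^ 2 * (v ⬝ᵥ v) :=
      mulVec_dot_le B⁻¹ v
    rw [hv1, mul_one] at h2
    apply le_of_sq_le_sq' (le_of_lt hs1A) (mul_nonneg (le_of_lt hσ') hs1Binv)
    rw [hv2] at h1
    calc (sval 1 A) ^ 2 ≤ (sval 1 (A * B)) ^ 2 * ((B⁻¹ *ᵥ v) ⬝ᵥ (B⁻¹ *ᵥ v)) := h1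
      _ ≤ (sval 1 (A * B)) ^ 2 * ((sval 1 B⁻¹) ^ 2) := by
          exact mul_le_mul_of_nonneg_left h2 (sq_nonneg _)
      _ = (sval 1 (A * B) * sval 1 B⁻¹) ^ 2 := by ring
  -- final chain
  have final2 : sval 2 A * sval 1 B / sval 1 (A * B) ≤
      (sval 2 A / sval 1 A) * (sval 1 B * sval 1 B⁻¹) := by
    rw [div_mul_eq_mul_div, div_le_div_iff₀ hσ' hs1A]
    nlinarith [mul_le_mul_of_nonneg_left hlow (mul_nonneg hs2A hs1B)]
  calc Real.sqrt (1 - (u ⬝ᵥ w) ^ 2) = Real.sqrt (y ⬝ᵥ y) := by rw [hyy]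
    _ ≤ sval 2 A * sval 1 B / sval 1 (A * B) := target1
    _ ≤ (sval 2 A / sval 1 A) * (sval 1 B * sval 1 B⁻¹) := final2

end Step


/-! ### The sine metric via an embedding -/

section Metric

noncomputable def Tm (u : n → ℝ) : EuclideanSpace ℝ (n × n) :=
  (WithLp.equiv 2 ((n × n) → ℝ)).symm (fun p => u p.1 * u p.2)

lemma dotU (a b c d : n → ℝ) :
    (fun p : n × n => a p.1 * b p.2) ⬝ᵥ (fun p : n × n => c p.1 * d p.2) =
      (a ⬝ᵥ c) * (b ⬝ᵥ d) := by
  rw [dotProduct, Fintype.sum_prod_type]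
  calc ∑ i, ∑ j, (a i * b j) * (c i * d j)
      = ∑ i, ∑ j, (a i * c i) * (b j * d j) :=
        Finset.sum_congr rfl fun i _ => Finset.sum_congr rfl fun j _ => by ring
    _ = (∑ i, a i * c i) * (∑ j, b j * d j) := by
        rw [← Finset.sum_mul_sum]
    _ = (a ⬝ᵥ c) * (b ⬝ᵥ d) := rfl

lemma norm_Tm_sub {u w : n → ℝ} (hu : u ⬝ᵥ u = 1) (hw : w ⬝ᵥ w = 1) :
    ‖Tm u - Tm w‖ = Real.sqrt (2 - 2 * (u ⬝ᵥ w) ^ 2) := by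
  rw [EuclideanSpace.norm_eq]
  congr 1
  have happ : ∀ p : n × n, (Tm u - Tm w) p = u p.1 * u p.2 - w p.1 * w p.2 := by
    intro p; rfl
  have h1 : ∑ p : n × n, ‖(Tm u - Tm w) p‖ ^ 2 =
      ∑ p : n × n, (u p.1 * u p.2 - w p.1 * w p.2) ^ 2 := by
    apply Finset.sum_congr rfl
    intro p _
    rw [happ p, Real.norm_eq_abs, sq_abs]
  rw [h1]
  have h2 : ∑ p : n × n, (u p.1 * u p.2 - w p.1 * w p.2) ^ 2 =
      ((fun p : n × n => u p.1 * u p.2) ⬝ᵥ (fun p : n × n => u p.1 * u p.2))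
      - 2 * ((fun p : n × n => u p.1 * u p.2) ⬝ᵥ (fun p : n × n => w p.1 * w p.2))
      + ((fun p : n × n => w p.1 * w p.2) ⬝ᵥ (fun p : n × n => w p.1 * w p.2)) := by
    simp only [dotProduct]
    rw [Finset.mul_sum, ← Finset.sum_sub_distrib, ← Finset.sum_add_distrib]
    apply Finset.sum_congr rfl
    intro p _
    ring
  rw [h2, dotU, dotU, dotU, hu, hw]
  ring

lemma sine_dist_eq {u w : n → ℝ} (hu : u ⬝ᵥ u = 1) (hw : w ⬝ᵥ w = 1) :
    Real.sqrt (1 - (u ⬝ᵥ w) ^ 2) = ‖Tm u - Tm w‖ / Real.sqrt 2 := by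
  rw [norm_Tm_sub hu hw]
  have h : (2 - 2 * (u ⬝ᵥ w) ^ 2 : ℝ) = 2 * (1 - (u ⬝ᵥ w) ^ 2) := by ring
  rw [h, Real.sqrt_mul (by norm_num : (0:ℝ) ≤ 2)]
  rw [mul_comm, mul_div_assoc, div_self (by positivity : Real.sqrt 2 ≠ 0), mul_one]

lemma chain_sine_bound (N : ℕ) (v : ℕ → (n → ℝ)) (bound : ℕ → ℝ)
    (hunit : ∀ i ≤ N, v i ⬝ᵥ v i = 1)
    (hstep : ∀ i < N, Real.sqrt (1 - (v i ⬝ᵥ v (i + 1)) ^ 2) ≤ bound i) :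
    Real.sqrt (1 - (v 0 ⬝ᵥ v N) ^ 2) ≤ ∑ i ∈ Finset.range N, bound i := by
  have htele : ‖Tm (v 0) - Tm (v N)‖ ≤
      ∑ i ∈ Finset.range N, ‖Tm (v i) - Tm (v (i + 1))‖ := by
    clear hstep hunit
    induction N with
    | zero => simp
    | succ m ih =>
      calc ‖Tm (v 0) - Tm (v (m + 1))‖
          ≤ ‖Tm (v 0) - Tm (v m)‖ + ‖Tm (v m) - Tm (v (m + 1))‖ := by
            have := dist_triangle (Tm (v 0)) (Tm (v m)) (Tm (v (m + 1)))
            simpa [dist_eq_norm] using this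
        _ ≤ (∑ i ∈ Finset.range m, ‖Tm (v i) - Tm (v (i + 1))‖) +
            ‖Tm (v m) - Tm (v (m + 1))‖ := by
            exact add_le_add ih le_rfl
        _ = ∑ i ∈ Finset.range (m + 1), ‖Tm (v i) - Tm (v (i + 1))‖ := by
            rw [Finset.sum_range_succ]
  rw [sine_dist_eq (hunit 0 (Nat.zero_le N)) (hunit N le_rfl)]
  rw [div_le_iff₀ (by positivity : (0:ℝ) < Real.sqrt 2)]
  calc ‖Tm (v 0) - Tm (v N)‖ ≤ ∑ i ∈ Finset.range N, ‖Tm (v i) - Tm (v (i + 1))‖ := htele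
    _ ≤ ∑ i ∈ Finset.range N, (bound i * Real.sqrt 2) := by
        apply Finset.sum_le_sum
        intro i hi
        have hiN : i < N := Finset.mem_range.1 hi
        have h1 := hstep i hiN
        have h2 := sine_dist_eq (hunit i (le_of_lt hiN)) (hunit (i + 1) hiN)
        rw [h2, div_le_iff₀ (by positivity : (0:ℝ) < Real.sqrt 2)] at h1
        linarith
    _ = (∑ i ∈ Finset.range N, bound i) * Real.sqrt 2 := by
        rw [Finset.sum_mul]

end Metric


/-! ### Group-theoretic lemmas -/

section Group

variable {Γ : Type*} [Group Γ]

lemma exists_word {S : Set Γ} (hgen : Subgroup.closure S = ⊤) (γ : Γ) :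
    ∃ l : List Γ, (∀ x ∈ l, x ∈ S ∨ x⁻¹ ∈ S) ∧ l.prod = γ := by
  have hγ : γ ∈ Subgroup.closure S := by rw [hgen]; exact Subgroup.mem_top γ
  refine Subgroup.closure_induction
    (p := fun g _ => ∃ l : List Γ, (∀ x ∈ l, x ∈ S ∨ x⁻¹ ∈ S) ∧ l.prod = g)
    ?_ ?_ ?_ ?_ hγ
  · intro x hx
    exact ⟨[x], by simp [hx], by simp⟩
  · exact ⟨[], by simp, by simp⟩
  · rintro a b _ _ ⟨la, hla, rfl⟩ ⟨lb, hlb, rfl⟩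
    refine ⟨la ++ lb, ?_, by rw [List.prod_append]⟩
    intro x hx
    rcases List.mem_append.1 hx with h | h
    · exact hla x h
    · exact hlb x h
  · rintro a _ ⟨la, hla, rfl⟩
    refine ⟨(la.map (·⁻¹)).reverse, ?_, ?_⟩
    · intro x hx
      simp only [List.mem_reverse, List.mem_map] at hx
      obtain ⟨yy, hyy, rfl⟩ := hx
      rcases hla yy hyy with h | h
      · right; simpa using h
      · left; exact h
    · rw [← List.prod_inv_reverse]

lemma wordLength_spec {S : Set Γ} (hgen : Subgroup.closure S = ⊤) (γ : Γ) :
    ∃ l : List Γ, l.length = wordLength S γ ∧ (∀ x ∈ l, x ∈ S ∨ x⁻¹ ∈ S) ∧ l.prod = γ := by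
  obtain ⟨l, hmem, hprod⟩ := exists_word hgen γ
  have hne : {nn : ℕ | ∃ l : List Γ, l.length = nn ∧
      (∀ x ∈ l, x ∈ S ∨ x⁻¹ ∈ S) ∧ l.prod = γ}.Nonempty := ⟨l.length, l, rfl, hmem, hprod⟩
  have h := Nat.sInf_mem hne
  obtain ⟨l', hl1, hl2, hl3⟩ := h
  exact ⟨l', hl1, hl2, hl3⟩

lemma prodlist_finite {T : Set Γ} (hT : T.Finite) (N : ℕ) :
    {γ : Γ | ∃ l : List Γ, l.length ≤ N ∧ (∀ x ∈ l, x ∈ T) ∧ l.prod = γ}.Finite := by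
  induction N with
  | zero =>
    apply Set.Finite.subset (Set.finite_singleton (1 : Γ))
    rintro γ ⟨l, hl, -, rfl⟩
    have : l = [] := List.length_eq_zero_iff.1 (Nat.le_zero.1 hl)
    simp [this]
  | succ m ih =>
    apply Set.Finite.subset ((Set.finite_singleton (1 : Γ)).union (hT.mul ih))
    rintro γ ⟨l, hl, hmem, rfl⟩
    cases l with
    | nil => left; simp
    | cons a t =>
      right
      rw [List.prod_cons]
      exact Set.mul_mem_mul (hmem a (by simp))
        ⟨t, by simpa using hl, fun x hx => hmem x (by simp [hx]), rfl⟩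

lemma ball_finite {S : Set Γ} (hS : S.Finite) (hgen : Subgroup.closure S = ⊤) (N : ℕ) :
    {γ : Γ | wordLength S γ ≤ N}.Finite := by
  apply Set.Finite.subset (prodlist_finite (hS.union hS.inv) N)
  intro γ hγ
  obtain ⟨l, hlen, hmem, hprod⟩ := wordLength_spec hgen γ
  refine ⟨l, by rw [hlen]; exact hγ, ?_, hprod⟩
  intro x hx
  rcases hmem x hx with h | h
  · exact Set.mem_union_left _ h
  · exact Set.mem_union_right _ (Set.mem_inv.2 (by simpa using h))

lemma floyd_set_nonempty {S : Set Γ} (hgen : Subgroup.closure S = ⊤) (f : ℕ → ℝ) (g h : Γ) :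
    {r : ℝ | ∃ (n : ℕ) (x : ℕ → Γ), x 0 = g ∧ x n = h ∧
      (∀ i < n, (x i)⁻¹ * x (i + 1) ∈ S ∨ ((x i)⁻¹ * x (i + 1))⁻¹ ∈ S) ∧
      r = ∑ i ∈ Finset.range n, f (max (wordLength S (x i))
        (wordLength S (x (i + 1))))}.Nonempty := by
  obtain ⟨l, hmem, hprod⟩ := exists_word hgen (g⁻¹ * h)
  refine ⟨_, l.length, fun i => g * (l.take i).prod, by simp, ?_, ?_, rfl⟩
  · show g * (List.take l.length l).prod = h
    rw [List.take_length, hprod]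
    group
  · intro i hi
    have key : (g * (l.take i).prod)⁻¹ * (g * (l.take (i + 1)).prod) = l.get ⟨i, hi⟩ := by
      rw [List.prod_take_succ l i hi]
      simp only [List.get_eq_getElem]
      group
    rw [key]
    exact hmem _ (l.get_mem _)

end Group


lemma exists_top_eigenvector (A : Matrix n n ℝ) [Nonempty n] (hdet : IsUnit A.det) :
    ∃ u : n → ℝ, u ⬝ᵥ u = 1 ∧ (A * Aᵀ) *ᵥ u = (sval 1 A) ^ 2 • u := by
  set hM := isHermitian_mul_transpose_self' A
  obtain ⟨i, hi⟩ := exists_nu_eq_sq_sval_one A hdet hM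
  exact ⟨evec hM i, evec_dot_self _ hM i, by rw [mulVec_evec hM i, hi]⟩

end FloydAux

open FloydAux in
/-- Let `Γ` be a group with finite generating set `S`, `f` a Floyd function,
and `ρ : Γ → SL(d, ℝ)` a homomorphism with `σ₂(ρ(γ))/σ₁(ρ(γ)) ≤ K f(|γ|)` for all `γ`.
Then there are `C > 0` and a finite set `A ⊆ Γ` such that for all `g, h ∉ A` and all unit
vectors `u, w` spanning the Cartan attractors of `ρ(g)`, `ρ(h)` (i.e. top eigenvectors of
`ρ(g)ρ(g)ᵀ`, `ρ(h)ρ(h)ᵀ`), `√(1 − ⟨u,w⟩²) ≤ C d_f(g,h)`. -/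
theorem floyd_lipschitz_cartan_attractor
    {Γ : Type*} [Group Γ] (S : Finset Γ)
    (hgen : Subgroup.closure (S : Set Γ) = ⊤)
    (f : ℕ → ℝ) (hfpos : ∀ n, 0 < f n) (hfsum : Summable f)
    (hfanti : ∀ n, f (n + 1) ≤ f n)
    (hfm : ∃ m : ℝ, 0 < m ∧ m ≤ 1 ∧ ∀ k : ℕ, m * f k ≤ f (k + 1))
    (d : ℕ) (hd : 2 ≤ d)
    (ρ : Γ →* Matrix.SpecialLinearGroup (Fin d) ℝ)
    (K : ℝ) (hK : 0 < K)
    (hgap : ∀ γ : Γ,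
      sval 2 ((ρ γ : Matrix (Fin d) (Fin d) ℝ)) / sval 1 ((ρ γ : Matrix (Fin d) (Fin d) ℝ)) ≤
        K * f (wordLength (S : Set Γ) γ)) :
    ∃ C : ℝ, 0 < C ∧ ∃ A : Finset Γ,
      ∀ g h : Γ, g ∉ A → h ∉ A →
        ∀ u w : Fin d → ℝ, u ⬝ᵥ u = 1 → w ⬝ᵥ w = 1 →
          ((ρ g : Matrix (Fin d) (Fin d) ℝ) * (ρ g : Matrix (Fin d) (Fin d) ℝ)ᵀ).mulVec u =
            (sval 1 ((ρ g : Matrix (Fin d) (Fin d) ℝ))) ^ 2 • u →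
          ((ρ h : Matrix (Fin d) (Fin d) ℝ) * (ρ h : Matrix (Fin d) (Fin d) ℝ)ᵀ).mulVec w =
            (sval 1 ((ρ h : Matrix (Fin d) (Fin d) ℝ))) ^ 2 • w →
          Real.sqrt (1 - (u ⬝ᵥ w) ^ 2) ≤ C * floydDist (S : Set Γ) f g h := by
  classical
  have hcard : 2 ≤ Fintype.card (Fin d) := by simpa using hd
  have hne : Nonempty (Fin d) := Fintype.card_pos_iff.1 (by omega)
  have hdet : ∀ γ : Γ, IsUnit ((ρ γ : Matrix (Fin d) (Fin d) ℝ)).det := by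
    intro γ
    rw [Matrix.SpecialLinearGroup.det_coe]
    exact isUnit_one
  set Fct : Matrix (Fin d) (Fin d) ℝ → ℝ := fun M => sval 1 M * sval 1 M⁻¹ with hFctdef
  have hFct0 : ∀ M, 0 ≤ Fct M := fun M =>
    mul_nonneg (sval_one_nonneg M) (sval_one_nonneg M⁻¹)
  set L : ℝ := 1 + ∑ t ∈ S, (Fct ((ρ t : Matrix (Fin d) (Fin d) ℝ)) +
      Fct ((ρ t⁻¹ : Matrix (Fin d) (Fin d) ℝ))) with hLdef
  have hsum0 : 0 ≤ ∑ t ∈ S, (Fct ((ρ t : Matrix (Fin d) (Fin d) ℝ)) +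
      Fct ((ρ t⁻¹ : Matrix (Fin d) (Fin d) ℝ))) :=
    Finset.sum_nonneg fun t _ => add_nonneg (hFct0 _) (hFct0 _)
  have hL1 : 1 ≤ L := by rw [hLdef]; linarith
  have hLfac : ∀ s : Γ, (s ∈ (S : Set Γ) ∨ s⁻¹ ∈ (S : Set Γ)) →
      Fct ((ρ s : Matrix (Fin d) (Fin d) ℝ)) ≤ L := by
    intro s hs
    rcases hs with h | h
    · have h1 := Finset.single_le_sum
        (f := fun t => Fct ((ρ t : Matrix (Fin d) (Fin d) ℝ)) +
          Fct ((ρ t⁻¹ : Matrix (Fin d) (Fin d) ℝ)))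
        (fun t _ => add_nonneg (hFct0 _) (hFct0 _)) (Finset.mem_coe.1 h)
      have h2 := hFct0 ((ρ s⁻¹ : Matrix (Fin d) (Fin d) ℝ))
      rw [hLdef]; linarith
    · have h1 := Finset.single_le_sum
        (f := fun t => Fct ((ρ t : Matrix (Fin d) (Fin d) ℝ)) +
          Fct ((ρ t⁻¹ : Matrix (Fin d) (Fin d) ℝ)))
        (fun t _ => add_nonneg (hFct0 _) (hFct0 _)) (Finset.mem_coe.1 h)
      simp only [inv_inv] at h1
      have h2 := hFct0 ((ρ s⁻¹ : Matrix (Fin d) (Fin d) ℝ))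
      rw [hLdef]; linarith
  set C : ℝ := K * L with hCdef
  have hC : 0 < C := mul_pos hK (by linarith)
  have htend : Filter.Tendsto f Filter.atTop (nhds 0) := hfsum.tendsto_atTop_zero
  have hev : ∀ᶠ m in Filter.atTop, f m < 1 / K :=
    htend.eventually_lt_const (by positivity)
  obtain ⟨N₀, hN₀⟩ := Filter.eventually_atTop.1 hev
  have hball := ball_finite S.finite_toSet hgen N₀
  refine ⟨C, hC, hball.toFinset, ?_⟩
  intro g h hg hh u w hu1 hw1 hueig hweig
  have hgap2 : ∀ γ : Γ, γ ∉ hball.toFinset →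
      sval 2 ((ρ γ : Matrix (Fin d) (Fin d) ℝ)) <
        sval 1 ((ρ γ : Matrix (Fin d) (Fin d) ℝ)) := by
    intro γ hγ
    have hlen : N₀ ≤ wordLength (S : Set Γ) γ := by
      by_contra hc
      push_neg at hc
      exact hγ (hball.mem_toFinset.2 (le_of_lt hc))
    have hf : f (wordLength (S : Set Γ) γ) < 1 / K := hN₀ _ hlen
    have hKf : K * f (wordLength (S : Set Γ) γ) < 1 := by
      rw [lt_div_iff₀ hK] at hf
      linarith [hf]
    have hpos1 : 0 < sval 1 ((ρ γ : Matrix (Fin d) (Fin d) ℝ)) :=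
      sval_one_pos _ (hdet γ)
    have hratio := lt_of_le_of_lt (hgap γ) hKf
    rw [div_lt_one hpos1] at hratio
    exact hratio
  -- bound every chain value
  have hkey : ∀ r ∈ {r : ℝ | ∃ (nn : ℕ) (x : ℕ → Γ), x 0 = g ∧ x nn = h ∧
      (∀ i < nn, (x i)⁻¹ * x (i + 1) ∈ (S : Set Γ) ∨
        ((x i)⁻¹ * x (i + 1))⁻¹ ∈ (S : Set Γ)) ∧
      r = ∑ i ∈ Finset.range nn, f (max (wordLength (S : Set Γ) (x i))
        (wordLength (S : Set Γ) (x (i + 1))))},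
      Real.sqrt (1 - (u ⬝ᵥ w) ^ 2) ≤ C * r := by
    rintro r ⟨nn, x, hx0, hxn, hstep, rfl⟩
    by_cases hn0 : nn = 0
    · subst hn0
      have hgh : g = h := by rw [← hx0, hxn]
      have hlt := hgap2 g hg
      have hweig' : ((ρ g : Matrix (Fin d) (Fin d) ℝ) *
          (ρ g : Matrix (Fin d) (Fin d) ℝ)ᵀ).mulVec w =
          (sval 1 ((ρ g : Matrix (Fin d) (Fin d) ℝ))) ^ 2 • w := by
        rw [hgh]; exact hweig
      have huni := eigenvector_unique (ρ g : Matrix (Fin d) (Fin d) ℝ) (hdet g) hcard hlt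
        hu1 hw1 hueig hweig'
      have hzero : (1 : ℝ) - (u ⬝ᵥ w) ^ 2 = 0 := by rw [huni]; ring
      rw [hzero, Real.sqrt_zero]
      simp
    · -- choose eigenvectors along the chain
      have hch : ∀ i : ℕ, ∃ z : Fin d → ℝ, z ⬝ᵥ z = 1 ∧
          ((ρ (x i) : Matrix (Fin d) (Fin d) ℝ) *
            (ρ (x i) : Matrix (Fin d) (Fin d) ℝ)ᵀ) *ᵥ z =
            (sval 1 ((ρ (x i) : Matrix (Fin d) (Fin d) ℝ))) ^ 2 • z :=
        fun i => exists_top_eigenvector _ (hdet _)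
      set v : ℕ → (Fin d → ℝ) := fun i =>
        if i = 0 then u else if i = nn then w else Classical.choose (hch i) with hvdef
      have hv0 : v 0 = u := by rw [hvdef]; simp
      have hvn : v nn = w := by rw [hvdef]; simp [hn0]
      have hvmid : ∀ i : ℕ, i ≠ 0 → i ≠ nn → v i = Classical.choose (hch i) := by
        intro i h0 hn
        rw [hvdef]
        simp [h0, hn]
      have hvu : ∀ i ≤ nn, v i ⬝ᵥ v i = 1 := by
        intro i _
        by_cases h0 : i = 0
        · rw [h0, hv0]; exact hu1
        · by_cases hn : i = nn
          · rw [hn, hvn]; exact hw1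
          · rw [hvmid i h0 hn]
            exact (Classical.choose_spec (hch i)).1
      have hveig : ∀ i ≤ nn, ((ρ (x i) : Matrix (Fin d) (Fin d) ℝ) *
          (ρ (x i) : Matrix (Fin d) (Fin d) ℝ)ᵀ) *ᵥ (v i) =
          (sval 1 ((ρ (x i) : Matrix (Fin d) (Fin d) ℝ))) ^ 2 • (v i) := by
        intro i _
        by_cases h0 : i = 0
        · subst h0
          rw [hv0, hx0]
          exact hueig
        · by_cases hn : i = nn
          · subst hn
            rw [hvn, hxn]
            exact hweig
          · rw [hvmid i h0 hn]
            exact (Classical.choose_spec (hch i)).2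
      have hstepbound : ∀ i < nn, Real.sqrt (1 - (v i ⬝ᵥ v (i + 1)) ^ 2) ≤
          C * f (max (wordLength (S : Set Γ) (x i)) (wordLength (S : Set Γ) (x (i + 1)))) := by
        intro i hi
        set a := x i with hadef
        set b := x (i + 1) with hbdef
        have hs : a⁻¹ * b ∈ (S : Set Γ) ∨ (a⁻¹ * b)⁻¹ ∈ (S : Set Γ) := hstep i hi
        have hKfpos : ∀ m : ℕ, 0 ≤ K * f m := fun m => le_of_lt (mul_pos hK (hfpos m))
        by_cases hcmp : wordLength (S : Set Γ) b ≤ wordLength (S : Set Γ) a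
        · -- use A = ρ a, B = ρ (a⁻¹ b)
          have hABeq : (ρ a : Matrix (Fin d) (Fin d) ℝ) *
              (ρ (a⁻¹ * b) : Matrix (Fin d) (Fin d) ℝ) = (ρ b : Matrix (Fin d) (Fin d) ℝ) := by
            rw [← Matrix.SpecialLinearGroup.coe_mul, ← _root_.map_mul]
            congr 1
            group
            rfl
          have hweig2 : (((ρ a : Matrix (Fin d) (Fin d) ℝ) *
              (ρ (a⁻¹ * b) : Matrix (Fin d) (Fin d) ℝ)) *
              ((ρ a : Matrix (Fin d) (Fin d) ℝ) *
              (ρ (a⁻¹ * b) : Matrix (Fin d) (Fin d) ℝ))ᵀ) *ᵥ (v (i + 1)) =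
              (sval 1 ((ρ a : Matrix (Fin d) (Fin d) ℝ) *
                (ρ (a⁻¹ * b) : Matrix (Fin d) (Fin d) ℝ))) ^ 2 • (v (i + 1)) := by
            rw [hABeq]
            exact hveig (i + 1) hi
          have hsb := step_bound (ρ a : Matrix (Fin d) (Fin d) ℝ)
            (ρ (a⁻¹ * b) : Matrix (Fin d) (Fin d) ℝ) hcard (hdet a) (hdet _)
            (hvu i (le_of_lt hi)) (hvu (i + 1) hi) (hveig i (le_of_lt hi)) hweig2
          have hmax : max (wordLength (S : Set Γ) a) (wordLength (S : Set Γ) b) =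
              wordLength (S : Set Γ) a := max_eq_left hcmp
          rw [hmax]
          calc Real.sqrt (1 - (v i ⬝ᵥ v (i + 1)) ^ 2)
              ≤ (sval 2 ((ρ a : Matrix (Fin d) (Fin d) ℝ)) /
                  sval 1 ((ρ a : Matrix (Fin d) (Fin d) ℝ))) *
                  Fct ((ρ (a⁻¹ * b) : Matrix (Fin d) (Fin d) ℝ)) := hsb
            _ ≤ (K * f (wordLength (S : Set Γ) a)) * L :=
                mul_le_mul (hgap a) (hLfac _ hs) (hFct0 _) (hKfpos _)
            _ = C * f (wordLength (S : Set Γ) a) := by rw [hCdef]; ring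
        · -- use A = ρ b, B = ρ (b⁻¹ a)
          push_neg at hcmp
          have hABeq : (ρ b : Matrix (Fin d) (Fin d) ℝ) *
              (ρ ((a⁻¹ * b)⁻¹) : Matrix (Fin d) (Fin d) ℝ) =
              (ρ a : Matrix (Fin d) (Fin d) ℝ) := by
            rw [← Matrix.SpecialLinearGroup.coe_mul, ← _root_.map_mul]
            congr 1
            group
            rfl
          have hweig2 : (((ρ b : Matrix (Fin d) (Fin d) ℝ) *
              (ρ ((a⁻¹ * b)⁻¹) : Matrix (Fin d) (Fin d) ℝ)) *
              ((ρ b : Matrix (Fin d) (Fin d) ℝ) *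
              (ρ ((a⁻¹ * b)⁻¹) : Matrix (Fin d) (Fin d) ℝ))ᵀ) *ᵥ (v i) =
              (sval 1 ((ρ b : Matrix (Fin d) (Fin d) ℝ) *
                (ρ ((a⁻¹ * b)⁻¹) : Matrix (Fin d) (Fin d) ℝ))) ^ 2 • (v i) := by
            rw [hABeq]
            exact hveig i (le_of_lt hi)
          have hsb := step_bound (ρ b : Matrix (Fin d) (Fin d) ℝ)
            (ρ ((a⁻¹ * b)⁻¹) : Matrix (Fin d) (Fin d) ℝ) hcard (hdet b) (hdet _)
            (hvu (i + 1) hi) (hvu i (le_of_lt hi)) (hveig (i + 1) hi) hweig2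
          have hs' : (a⁻¹ * b)⁻¹ ∈ (S : Set Γ) ∨ ((a⁻¹ * b)⁻¹)⁻¹ ∈ (S : Set Γ) := by
            rcases hs with hh' | hh'
            · right; rw [inv_inv]; exact hh'
            · left; exact hh'
          have hmax : max (wordLength (S : Set Γ) a) (wordLength (S : Set Γ) b) =
              wordLength (S : Set Γ) b := max_eq_right (le_of_lt hcmp)
          rw [hmax]
          have hcomm : (v (i + 1) ⬝ᵥ v i) ^ 2 = (v i ⬝ᵥ v (i + 1)) ^ 2 := by
            rw [dotProduct_comm]
          rw [hcomm] at hsb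
          calc Real.sqrt (1 - (v i ⬝ᵥ v (i + 1)) ^ 2)
              ≤ (sval 2 ((ρ b : Matrix (Fin d) (Fin d) ℝ)) /
                  sval 1 ((ρ b : Matrix (Fin d) (Fin d) ℝ))) *
                  Fct ((ρ ((a⁻¹ * b)⁻¹) : Matrix (Fin d) (Fin d) ℝ)) := hsb
            _ ≤ (K * f (wordLength (S : Set Γ) b)) * L :=
                mul_le_mul (hgap b) (hLfac _ hs') (hFct0 _) (hKfpos _)
            _ = C * f (wordLength (S : Set Γ) b) := by rw [hCdef]; ring
      have hchain := chain_sine_bound nn v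
        (fun i => C * f (max (wordLength (S : Set Γ) (x i))
          (wordLength (S : Set Γ) (x (i + 1))))) hvu hstepbound
      rw [hv0, hvn] at hchain
      calc Real.sqrt (1 - (u ⬝ᵥ w) ^ 2)
          ≤ ∑ i ∈ Finset.range nn, C * f (max (wordLength (S : Set Γ) (x i))
            (wordLength (S : Set Γ) (x (i + 1)))) := hchain
        _ = C * ∑ i ∈ Finset.range nn, f (max (wordLength (S : Set Γ) (x i))
            (wordLength (S : Set Γ) (x (i + 1)))) := by rw [Finset.mul_sum]
  have hnonempty := floyd_set_nonempty hgen f g h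
  have hlb : Real.sqrt (1 - (u ⬝ᵥ w) ^ 2) / C ≤ floydDist (S : Set Γ) f g h := by
    apply le_csInf hnonempty
    intro b hb
    rw [div_le_iff₀ hC]
    calc Real.sqrt (1 - (u ⬝ᵥ w) ^ 2) ≤ C * b := hkey b hb
      _ = b * C := mul_comm _ _
  calc Real.sqrt (1 - (u ⬝ᵥ w) ^ 2)
      = Real.sqrt (1 - (u ⬝ᵥ w) ^ 2) / C * C := (div_mul_cancel₀ _ (ne_of_gt hC)).symm
    _ ≤ floydDist (S : Set Γ) f g h * C :=
        mul_le_mul_of_nonneg_right hlb (le_of_lt hC)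
    _ = C * floydDist (S : Set Γ) f g h := mul_comm _ _
end

section
/- Let Γ₁ and Γ₂ be groups with finite generating sets S₁ and S₂ respectively. If Γ₁ (with respect to S₁) and Γ₂ (with respect to S₂) both satisfy weak Property U, then the direct product Γ₁ × Γ₂, with the finite generating set (S₁ × {1}) ∪ ({1} × S₂), satisfies weak Property U. -/
/-- The stable (translation) length `|γ|_∞ = lim_n |γⁿ|/n`; by subadditivity (Fekete's
lemma) the limit exists and equals `inf_{n ≥ 1} |γⁿ|/n`, which we take as definition. -/
noncomputable def stableLength {Γ : Type*} [Group Γ] (S : Set Γ) (γ : Γ) : ℝ :=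
  sInf {x : ℝ | ∃ n : ℕ, 0 < n ∧ x = (wordLength S (γ ^ n) : ℝ) / n}

/-- Weak Property U: there are a finite set `F ⊆ Γ` and constants `C, c > 0` such that each
`γ ∈ Γ` admits `f ∈ F` with `|fγ|_∞ ≥ c·|γ|_Γ − C`. -/
def WeakPropertyU {Γ : Type*} [Group Γ] (S : Set Γ) : Prop :=
  ∃ F : Finset Γ, ∃ C c : ℝ, 0 < C ∧ 0 < c ∧
    ∀ γ : Γ, ∃ f ∈ F, c * (wordLength S γ : ℝ) - C ≤ stableLength S (f * γ)

section Aux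

variable {G : Type*} [Group G]

/-- In a generated group, every element is a product of generators/inverses. -/
lemma exists_word {S : Set G} (hgen : Subgroup.closure S = ⊤) (γ : G) :
    ∃ l : List G, (∀ x ∈ l, x ∈ S ∨ x⁻¹ ∈ S) ∧ l.prod = γ := by
  have hγ : γ ∈ (Subgroup.closure S).toSubmonoid := by rw [hgen]; trivial
  rw [Subgroup.closure_toSubmonoid] at hγ
  obtain ⟨l, hl, hprod⟩ := Submonoid.exists_list_of_mem_closure hγ
  refine ⟨l, fun x hx => ?_, hprod⟩
  rcases hl x hx with h | h
  · exact Or.inl h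
  · exact Or.inr (by rwa [Set.mem_inv] at h)

lemma wordSet_nonempty {S : Set G} (hgen : Subgroup.closure S = ⊤) (γ : G) :
    {n : ℕ | ∃ l : List G, l.length = n ∧ (∀ x ∈ l, x ∈ S ∨ x⁻¹ ∈ S) ∧ l.prod = γ}.Nonempty := by
  obtain ⟨l, h1, h2⟩ := exists_word hgen γ
  exact ⟨l.length, l, rfl, h1, h2⟩

/-- There is a minimizing word. -/
lemma exists_min_word {S : Set G} (hgen : Subgroup.closure S = ⊤) (γ : G) :
    ∃ l : List G, l.length = wordLength S γ ∧ (∀ x ∈ l, x ∈ S ∨ x⁻¹ ∈ S) ∧ l.prod = γ :=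
  Nat.sInf_mem (wordSet_nonempty hgen γ)

lemma wordLength_le {S : Set G} {γ : G} {l : List G}
    (hl : ∀ x ∈ l, x ∈ S ∨ x⁻¹ ∈ S) (hp : l.prod = γ) :
    wordLength S γ ≤ l.length :=
  Nat.sInf_le ⟨l, rfl, hl, hp⟩

lemma filter_word (P : G → Prop) :
    ∀ l : List G, (∀ x ∈ l, P x ∨ x = 1) →
      ∃ l' : List G, l'.length ≤ l.length ∧ (∀ x ∈ l', P x) ∧ l'.prod = l.prod := by
  intro l
  induction l with
  | nil => exact fun _ => ⟨[], le_rfl, by simp, rfl⟩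
  | cons a l ih =>
    intro h
    obtain ⟨l', h1, h2, h3⟩ := ih (fun x hx => h x (List.mem_cons_of_mem a hx))
    rcases h a (List.mem_cons_self (a := a) (l := l)) with ha | ha
    · exact ⟨a :: l', by simpa using h1, by
        intro x hx; rcases List.mem_cons.mp hx with rfl | hx
        exacts [ha, h2 x hx], by simp [h3]⟩
    · exact ⟨l', h1.trans (by simp), h2, by simp [h3, ha]⟩

lemma stableSet_bddBelow (S : Set G) (γ : G) :
    BddBelow {x : ℝ | ∃ n : ℕ, 0 < n ∧ x = (wordLength S (γ ^ n) : ℝ) / n} := by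
  refine ⟨0, fun x hx => ?_⟩
  obtain ⟨n, hn, rfl⟩ := hx
  positivity

end Aux

section ProdAux

variable {Γ₁ Γ₂ : Type*} [Group Γ₁] [Group Γ₂] {S₁ : Set Γ₁} {S₂ : Set Γ₂}

/-- Abbreviation for the product generating set. -/
private def U (S₁ : Set Γ₁) (S₂ : Set Γ₂) : Set (Γ₁ × Γ₂) :=
  (fun g => (g, (1 : Γ₂))) '' S₁ ∪ (fun g => ((1 : Γ₁), g)) '' S₂

lemma closure_U (hS₁gen : Subgroup.closure S₁ = ⊤) (hS₂gen : Subgroup.closure S₂ = ⊤) :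
    Subgroup.closure (U S₁ S₂) = ⊤ := by
  rw [eq_top_iff]
  rintro ⟨γ₁, γ₂⟩ -
  have h1 : ((γ₁, (1 : Γ₂)) : Γ₁ × Γ₂) ∈ Subgroup.closure (U S₁ S₂) := by
    have hγ : γ₁ ∈ Subgroup.closure S₁ := by rw [hS₁gen]; trivial
    refine Subgroup.closure_induction
      (fun s hs => Subgroup.subset_closure (Or.inl ⟨s, hs, rfl⟩))
      (one_mem _)
      (fun x y _ _ hx hy => by simpa using mul_mem hx hy)
      (fun x _ hx => by simpa using inv_mem hx) hγ
  have h2 : (((1 : Γ₁), γ₂) : Γ₁ × Γ₂) ∈ Subgroup.closure (U S₁ S₂) := by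
    have hγ : γ₂ ∈ Subgroup.closure S₂ := by rw [hS₂gen]; trivial
    refine Subgroup.closure_induction
      (fun s hs => Subgroup.subset_closure (Or.inr ⟨s, hs, rfl⟩))
      (one_mem _)
      (fun x y _ _ hx hy => by simpa using mul_mem hx hy)
      (fun x _ hx => by simpa using inv_mem hx) hγ
  simpa using mul_mem h1 h2

lemma wordLength_fst_le (hUgen : Subgroup.closure (U S₁ S₂) = ⊤) (p : Γ₁ × Γ₂) :
    wordLength S₁ p.1 ≤ wordLength (U S₁ S₂) p := by
  obtain ⟨l, hlen, hmem, hprod⟩ := exists_min_word hUgen p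
  have hmem' : ∀ x ∈ l.map Prod.fst, (x ∈ S₁ ∨ x⁻¹ ∈ S₁) ∨ x = 1 := by
    intro x hx
    obtain ⟨q, hq, rfl⟩ := List.mem_map.mp hx
    rcases hmem q hq with h | h
    · rcases h with ⟨s, hs, heq⟩ | ⟨s, hs, heq⟩
      · exact Or.inl (Or.inl (by rw [← heq]; exact hs))
      · exact Or.inr (by rw [← heq])
    · rcases h with ⟨s, hs, heq⟩ | ⟨s, hs, heq⟩
      · refine Or.inl (Or.inr ?_)
        have : q.1⁻¹ = s := congrArg Prod.fst heq.symm
        rw [this]; exact hs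
      · have : q.1⁻¹ = 1 := congrArg Prod.fst heq.symm
        exact Or.inr (inv_eq_one.mp this)
  obtain ⟨l', h1, h2, h3⟩ := filter_word (fun x => x ∈ S₁ ∨ x⁻¹ ∈ S₁) (l.map Prod.fst) hmem'
  have hprod' : l'.prod = p.1 := by
    rw [h3]
    have := (List.prod_hom l (MonoidHom.fst Γ₁ Γ₂)).symm
    simpa [hprod] using (List.prod_hom l (MonoidHom.fst Γ₁ Γ₂))
  calc wordLength S₁ p.1 ≤ l'.length := wordLength_le h2 hprod'
    _ ≤ (l.map Prod.fst).length := h1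
    _ = wordLength (U S₁ S₂) p := by simpa using hlen

lemma wordLength_snd_le (hUgen : Subgroup.closure (U S₁ S₂) = ⊤) (p : Γ₁ × Γ₂) :
    wordLength S₂ p.2 ≤ wordLength (U S₁ S₂) p := by
  obtain ⟨l, hlen, hmem, hprod⟩ := exists_min_word hUgen p
  have hmem' : ∀ x ∈ l.map Prod.snd, (x ∈ S₂ ∨ x⁻¹ ∈ S₂) ∨ x = 1 := by
    intro x hx
    obtain ⟨q, hq, rfl⟩ := List.mem_map.mp hx
    rcases hmem q hq with h | h
    · rcases h with ⟨s, hs, heq⟩ | ⟨s, hs, heq⟩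
      · exact Or.inr (by rw [← heq])
      · exact Or.inl (Or.inl (by rw [← heq]; exact hs))
    · rcases h with ⟨s, hs, heq⟩ | ⟨s, hs, heq⟩
      · have : q.2⁻¹ = 1 := congrArg Prod.snd heq.symm
        exact Or.inr (inv_eq_one.mp this)
      · refine Or.inl (Or.inr ?_)
        have : q.2⁻¹ = s := congrArg Prod.snd heq.symm
        rw [this]; exact hs
  obtain ⟨l', h1, h2, h3⟩ := filter_word (fun x => x ∈ S₂ ∨ x⁻¹ ∈ S₂) (l.map Prod.snd) hmem'
  have hprod' : l'.prod = p.2 := by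
    rw [h3]
    simpa [hprod] using (List.prod_hom l (MonoidHom.snd Γ₁ Γ₂))
  calc wordLength S₂ p.2 ≤ l'.length := wordLength_le h2 hprod'
    _ ≤ (l.map Prod.snd).length := h1
    _ = wordLength (U S₁ S₂) p := by simpa using hlen

lemma stableLength_fst_le (hUgen : Subgroup.closure (U S₁ S₂) = ⊤) (p : Γ₁ × Γ₂) :
    stableLength S₁ p.1 ≤ stableLength (U S₁ S₂) p := by
  refine le_csInf ⟨(wordLength (U S₁ S₂) (p ^ 1) : ℝ) / 1, 1, one_pos, by norm_num⟩ ?_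
  rintro b ⟨n, hn, rfl⟩
  have h1 : stableLength S₁ p.1 ≤ (wordLength S₁ (p.1 ^ n) : ℝ) / n :=
    csInf_le (stableSet_bddBelow S₁ p.1) ⟨n, hn, rfl⟩
  refine h1.trans ?_
  have h2 : wordLength S₁ (p.1 ^ n) ≤ wordLength (U S₁ S₂) (p ^ n) := by
    have := wordLength_fst_le hUgen (p ^ n)
    simpa using this
  gcongr

lemma stableLength_snd_le (hUgen : Subgroup.closure (U S₁ S₂) = ⊤) (p : Γ₁ × Γ₂) :
    stableLength S₂ p.2 ≤ stableLength (U S₁ S₂) p := by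
  refine le_csInf ⟨(wordLength (U S₁ S₂) (p ^ 1) : ℝ) / 1, 1, one_pos, by norm_num⟩ ?_
  rintro b ⟨n, hn, rfl⟩
  have h1 : stableLength S₂ p.2 ≤ (wordLength S₂ (p.2 ^ n) : ℝ) / n :=
    csInf_le (stableSet_bddBelow S₂ p.2) ⟨n, hn, rfl⟩
  refine h1.trans ?_
  have h2 : wordLength S₂ (p.2 ^ n) ≤ wordLength (U S₁ S₂) (p ^ n) := by
    have := wordLength_snd_le hUgen (p ^ n)
    simpa using this
  gcongr

lemma wordLength_prod_le (hS₁gen : Subgroup.closure S₁ = ⊤)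
    (hS₂gen : Subgroup.closure S₂ = ⊤) (γ₁ : Γ₁) (γ₂ : Γ₂) :
    wordLength (U S₁ S₂) (γ₁, γ₂) ≤ wordLength S₁ γ₁ + wordLength S₂ γ₂ := by
  obtain ⟨l₁, hlen₁, hmem₁, hprod₁⟩ := exists_min_word hS₁gen γ₁
  obtain ⟨l₂, hlen₂, hmem₂, hprod₂⟩ := exists_min_word hS₂gen γ₂
  set l : List (Γ₁ × Γ₂) :=
    l₁.map (MonoidHom.inl Γ₁ Γ₂) ++ l₂.map (MonoidHom.inr Γ₁ Γ₂) with hl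
  have hmem : ∀ x ∈ l, x ∈ U S₁ S₂ ∨ x⁻¹ ∈ U S₁ S₂ := by
    intro x hx
    rcases List.mem_append.mp hx with hx | hx
    · obtain ⟨s, hs, rfl⟩ := List.mem_map.mp hx
      rcases hmem₁ s hs with h | h
      · exact Or.inl (Or.inl ⟨s, h, rfl⟩)
      · refine Or.inr (Or.inl ⟨s⁻¹, h, ?_⟩)
        simp [MonoidHom.inl_apply, Prod.inv_mk]
    · obtain ⟨s, hs, rfl⟩ := List.mem_map.mp hx
      rcases hmem₂ s hs with h | h
      · exact Or.inl (Or.inr ⟨s, h, rfl⟩)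
      · refine Or.inr (Or.inr ⟨s⁻¹, h, ?_⟩)
        simp [MonoidHom.inr_apply, Prod.inv_mk]
  have hprod : l.prod = (γ₁, γ₂) := by
    rw [hl, List.prod_append, List.prod_hom l₁ (MonoidHom.inl Γ₁ Γ₂),
      List.prod_hom l₂ (MonoidHom.inr Γ₁ Γ₂), hprod₁, hprod₂]
    simp [Prod.ext_iff]
  calc wordLength (U S₁ S₂) (γ₁, γ₂) ≤ l.length := wordLength_le hmem hprod
    _ = wordLength S₁ γ₁ + wordLength S₂ γ₂ := by simp [hl, hlen₁, hlen₂]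

end ProdAux

/-- If `Γ₁` (with finite generating set `S₁`) and `Γ₂` (with finite
generating set `S₂`) satisfy weak Property U, then so does `Γ₁ × Γ₂` with the generating
set `(S₁ × {1}) ∪ ({1} × S₂)`. -/
theorem weakPropertyU_prod
    {Γ₁ Γ₂ : Type*} [Group Γ₁] [Group Γ₂]
    (S₁ : Set Γ₁) (S₂ : Set Γ₂)
    (hS₁fin : S₁.Finite) (hS₂fin : S₂.Finite)
    (hS₁gen : Subgroup.closure S₁ = ⊤) (hS₂gen : Subgroup.closure S₂ = ⊤)
    (h₁ : WeakPropertyU S₁) (h₂ : WeakPropertyU S₂) :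
    WeakPropertyU ((fun g => (g, (1 : Γ₂))) '' S₁ ∪ (fun g => ((1 : Γ₁), g)) '' S₂) := by
  classical
  show WeakPropertyU (U S₁ S₂)
  obtain ⟨F₁, C₁, c₁, hC₁, hc₁, hF₁⟩ := h₁
  obtain ⟨F₂, C₂, c₂, hC₂, hc₂, hF₂⟩ := h₂
  have hUgen : Subgroup.closure (U S₁ S₂) = ⊤ := closure_U hS₁gen hS₂gen
  refine ⟨F₁.image (fun f => (f, (1 : Γ₂))) ∪ F₂.image (fun f => ((1 : Γ₁), f)),
    max C₁ C₂, min c₁ c₂ / 2, lt_max_of_lt_left hC₁, by positivity, ?_⟩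
  rintro ⟨γ₁, γ₂⟩
  have hwlsum : (wordLength (U S₁ S₂) (γ₁, γ₂) : ℝ) ≤
      (wordLength S₁ γ₁ : ℝ) + (wordLength S₂ γ₂ : ℝ) := by
    exact_mod_cast wordLength_prod_le hS₁gen hS₂gen γ₁ γ₂
  by_cases hcase : wordLength S₂ γ₂ ≤ wordLength S₁ γ₁
  · obtain ⟨f₁, hf₁F, hf₁⟩ := hF₁ γ₁
    refine ⟨(f₁, (1 : Γ₂)), Finset.mem_union_left _ (Finset.mem_image_of_mem _ hf₁F), ?_⟩
    have key : stableLength S₁ (f₁ * γ₁) ≤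
        stableLength (U S₁ S₂) ((f₁, (1 : Γ₂)) * (γ₁, γ₂)) := by
      have heq : ((f₁, (1 : Γ₂)) * (γ₁, γ₂) : Γ₁ × Γ₂) = (f₁ * γ₁, γ₂) := by
        simp [Prod.ext_iff]
      rw [heq]
      exact stableLength_fst_le hUgen (f₁ * γ₁, γ₂)
    have hcase' : (wordLength S₂ γ₂ : ℝ) ≤ (wordLength S₁ γ₁ : ℝ) := by exact_mod_cast hcase
    have h3 : min c₁ c₂ / 2 * (wordLength (U S₁ S₂) (γ₁, γ₂) : ℝ) ≤
        c₁ * (wordLength S₁ γ₁ : ℝ) := by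
      have hm : min c₁ c₂ ≤ c₁ := min_le_left _ _
      nlinarith [(by positivity : (0:ℝ) ≤ (wordLength S₁ γ₁ : ℝ)), (by positivity : (0:ℝ) ≤ (wordLength (U S₁ S₂) (γ₁, γ₂) : ℝ)), hc₂.le]
    have hC : C₁ ≤ max C₁ C₂ := le_max_left _ _
    linarith
  · obtain ⟨f₂, hf₂F, hf₂⟩ := hF₂ γ₂
    refine ⟨((1 : Γ₁), f₂), Finset.mem_union_right _ (Finset.mem_image_of_mem _ hf₂F), ?_⟩
    have key : stableLength S₂ (f₂ * γ₂) ≤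
        stableLength (U S₁ S₂) (((1 : Γ₁), f₂) * (γ₁, γ₂)) := by
      have heq : (((1 : Γ₁), f₂) * (γ₁, γ₂) : Γ₁ × Γ₂) = (γ₁, f₂ * γ₂) := by
        simp [Prod.ext_iff]
      rw [heq]
      exact stableLength_snd_le hUgen (γ₁, f₂ * γ₂)
    push_neg at hcase
    have hcase' : (wordLength S₁ γ₁ : ℝ) ≤ (wordLength S₂ γ₂ : ℝ) := by
      exact_mod_cast hcase.le
    have h3 : min c₁ c₂ / 2 * (wordLength (U S₁ S₂) (γ₁, γ₂) : ℝ) ≤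
        c₂ * (wordLength S₂ γ₂ : ℝ) := by
      have hm : min c₁ c₂ ≤ c₂ := min_le_right _ _
      nlinarith [(by positivity : (0:ℝ) ≤ (wordLength S₂ γ₂ : ℝ)), (by positivity : (0:ℝ) ≤ (wordLength (U S₁ S₂) (γ₁, γ₂) : ℝ)), hc₁.le]
    have hC : C₂ ≤ max C₁ C₂ := le_max_right _ _
    linarith
end

section
/- Let Γ₁ and Γ₂ be groups with finite generating sets S₁ and S₂ respectively, and let φ : Γ₁ → Γ₂ be a surjective group homomorphism which is a quasi-isometry, i.e., there exist A ≥ 1 and B ≥ 0 with (1/A)·|γ|₁ − B ≤ |φ(γ)|₂ ≤ A·|γ|₁ + B for all γ ∈ Γ₁, where |·|₁ and |·|₂ are the word lengths with respect to S₁ and S₂. If Γ₁ satisfies weak Property U (with respect to S₁), then Γ₂ satisfies weak Property U (with respect to S₂). -/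
/-- Weak Property U is inherited under a surjective homomorphism which is
a quasi-isometry: if `φ : Γ₁ → Γ₂` is a surjective group homomorphism with
`(1/A)|γ|₁ − B ≤ |φ(γ)|₂ ≤ A|γ|₁ + B` and `Γ₁` satisfies weak Property U, then so
does `Γ₂`. -/
theorem weakPropertyU_of_surjective_quasiIsometry
    {Γ₁ Γ₂ : Type*} [Group Γ₁] [Group Γ₂]
    (S₁ : Set Γ₁) (S₂ : Set Γ₂)
    (hS₁fin : S₁.Finite) (hS₂fin : S₂.Finite)
    (hS₁gen : Subgroup.closure S₁ = ⊤) (hS₂gen : Subgroup.closure S₂ = ⊤)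
    (φ : Γ₁ →* Γ₂) (hφsurj : Function.Surjective φ)
    (A B : ℝ) (hA : 1 ≤ A) (hB : 0 ≤ B)
    (hqi : ∀ γ : Γ₁,
      (1 / A) * (wordLength S₁ γ : ℝ) - B ≤ (wordLength S₂ (φ γ) : ℝ) ∧
      (wordLength S₂ (φ γ) : ℝ) ≤ A * (wordLength S₁ γ : ℝ) + B)
    (h₁ : WeakPropertyU S₁) :
    WeakPropertyU S₂ := by
  classical
  obtain ⟨F, C, c, hC, hc, hU⟩ := h₁
  have hA0 : (0:ℝ) < A := lt_of_lt_of_le one_pos hA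
  refine ⟨F.image φ, c / (A * A) * B + C / A + B, c / (A * A), by positivity, by positivity, ?_⟩
  intro γ₂
  obtain ⟨γ₁, rfl⟩ := hφsurj γ₂
  obtain ⟨f, hf, hfle⟩ := hU γ₁
  refine ⟨φ f, Finset.mem_image_of_mem φ hf, ?_⟩
  rw [← map_mul]
  have key : ∀ x : Γ₁, (1 / A) * stableLength S₁ x - B ≤ stableLength S₂ (φ x) := by
    intro x
    have hne : {y : ℝ | ∃ n : ℕ, 0 < n ∧ y = (wordLength S₂ ((φ x) ^ n) : ℝ) / n}.Nonempty :=
      ⟨_, 1, one_pos, rfl⟩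
    apply le_csInf hne
    rintro y ⟨n, hn, rfl⟩
    have hstable : stableLength S₁ x ≤ (wordLength S₁ (x ^ n) : ℝ) / n := by
      apply csInf_le
      · exact ⟨0, by rintro z ⟨m, hm, rfl⟩; positivity⟩
      · exact ⟨n, hn, rfl⟩
    have hq := (hqi (x ^ n)).1
    rw [← map_pow]
    have hn1 : (1:ℝ) ≤ (n:ℝ) := by exact_mod_cast hn
    have hn0 : (0:ℝ) < (n:ℝ) := by linarith
    have h3 : ((1 / A) * (wordLength S₁ (x ^ n) : ℝ) - B) / n
        ≤ (wordLength S₂ (φ (x ^ n)) : ℝ) / n := by gcongr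
    have h4 : (1 / A) * stableLength S₁ x ≤ (1 / A) * ((wordLength S₁ (x ^ n) : ℝ) / n) :=
      mul_le_mul_of_nonneg_left hstable (by positivity)
    have h5 : ((1 / A) * (wordLength S₁ (x ^ n) : ℝ) - B) / n
        = (1 / A) * ((wordLength S₁ (x ^ n) : ℝ) / n) - B / n := by ring
    have h6 : B / n ≤ B := div_le_self hB hn1
    linarith
  have hkey := key (f * γ₁)
  have hq2 := (hqi γ₁).2
  have h1 : c / (A * A) * (wordLength S₂ (φ γ₁) : ℝ) ≤
      c / (A * A) * (A * (wordLength S₁ γ₁ : ℝ) + B) :=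
    mul_le_mul_of_nonneg_left hq2 (by positivity)
  have h2 : (1 / A) * (c * (wordLength S₁ γ₁ : ℝ) - C) ≤ (1 / A) * stableLength S₁ (f * γ₁) :=
    mul_le_mul_of_nonneg_left hfle (by positivity)
  have hfield : c / (A * A) * (A * (wordLength S₁ γ₁ : ℝ) + B)
      = (1 / A) * (c * (wordLength S₁ γ₁ : ℝ)) + c / (A * A) * B := by
    field_simp
  have hfield2 : (1 / A) * (c * (wordLength S₁ γ₁ : ℝ) - C)
      = (1 / A) * (c * (wordLength S₁ γ₁ : ℝ)) - C / A := by ring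
  linarith
end

section
/- Let m, d ≥ 3, A ∈ GL(m, ℝ), B ∈ GL(d, ℝ), and let A ⊗ B ∈ GL(md, ℝ) denote the Kronecker (tensor) product. Then: (a) σ₂(A ⊗ B)/σ₃(A ⊗ B) ≤ exp | log(σ₁(A)/σ₂(A)) − log(σ₁(B)/σ₂(B)) |; and (b) σ₂(A ⊗ B)/σ₃(A ⊗ B) ≥ min( exp | log(σ₁(A)/σ₂(A)) − log(σ₁(B)/σ₂(B)) |, σ₂(A)/σ₃(A), σ₂(B)/σ₃(B) ). -/
open Matrix

section Auxiliary

open Polynomial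

/-- The characteristic polynomial is invariant under conjugation by a pair of mutually
inverse matrices. -/
lemma charpoly_conj_aux {n R : Type*} [Fintype n] [DecidableEq n] [CommRing R]
    (U V M : Matrix n n R) (h1 : U * V = 1) :
    (U * M * V).charpoly = M.charpoly := by
  have hUV : U.map (C : R → R[X]) * V.map (C : R → R[X]) = 1 := by
    rw [show U.map (C : R → R[X]) = (C : R →+* R[X]).mapMatrix U from rfl,
      show V.map (C : R → R[X]) = (C : R →+* R[X]).mapMatrix V from rfl,
      ← _root_.map_mul, h1, _root_.map_one]
  have key : charmatrix (U * M * V) =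
      U.map (C : R → R[X]) * charmatrix M * V.map (C : R → R[X]) := by
    unfold charmatrix
    rw [mul_sub, sub_mul]
    congr 1
    · rw [scalar_apply, ← Matrix.smul_one_eq_diagonal, mul_smul_comm, smul_mul_assoc, mul_one, hUV]
    · rw [RingHom.mapMatrix_apply, RingHom.mapMatrix_apply, Matrix.map_mul, Matrix.map_mul]
  have hdet : (U.map (C : R → R[X])).det * (V.map (C : R → R[X])).det = 1 := by
    rw [← det_mul, hUV, det_one]
  rw [Matrix.charpoly, key, det_mul, det_mul, Matrix.charpoly]
  calc (U.map (C : R → R[X])).det * (charmatrix M).det * (V.map (C : R → R[X])).det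
      = (U.map (C : R → R[X])).det * (V.map (C : R → R[X])).det * (charmatrix M).det := by ring
    _ = (charmatrix M).det := by rw [hdet, one_mul]

lemma charpoly_diagonal_aux {n R : Type*} [Fintype n] [DecidableEq n] [CommRing R] (v : n → R) :
    (diagonal v).charpoly = ∏ i, (X - C (v i)) := by
  have : charmatrix (diagonal v) = diagonal fun i => (X : R[X]) - C (v i) := by
    ext i j
    by_cases h : i = j
    · subst h; simp [charmatrix_apply_eq]
    · simp [charmatrix_apply_ne _ _ _ h, diagonal_apply_ne _ h]
  rw [Matrix.charpoly, this, det_diagonal]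

lemma roots_charpoly_diagonal_aux {n : Type*} [Fintype n] [DecidableEq n] (v : n → ℝ) :
    (diagonal v).charpoly.roots = Finset.univ.val.map v := by
  rw [charpoly_diagonal_aux]
  rw [Polynomial.roots_prod _ _ (by
    apply Polynomial.Monic.ne_zero
    exact monic_prod_of_monic _ _ fun i _ => monic_X_sub_C (v i))]
  simp [Polynomial.roots_X_sub_C, Multiset.bind_singleton]

/-- The multiset of eigenvalues of a real hermitian matrix is the multiset of roots of its
characteristic polynomial. -/
lemma eigenvalues_multiset_eq_roots_charpoly {n : Type*} [Fintype n] [DecidableEq n]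
    {M : Matrix n n ℝ} (hM : M.IsHermitian) :
    Finset.univ.val.map hM.eigenvalues = M.charpoly.roots := by
  conv_rhs => rw [hM.spectral_theorem, Unitary.conjStarAlgAut_apply]
  rw [charpoly_conj_aux _ _ _ (Unitary.coe_mul_star_self _)]
  rw [show (RCLike.ofReal ∘ hM.eigenvalues : n → ℝ) = hM.eigenvalues by
    funext i; simp [RCLike.ofReal_real_eq_id]]
  rw [roots_charpoly_diagonal_aux]

/-- The multiset of singular values of a real square matrix. -/
noncomputable def svMultiset {n : Type*} [Fintype n] [DecidableEq n]
    (A : Matrix n n ℝ) : Multiset ℝ :=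
  Finset.univ.val.map fun i =>
    Real.sqrt ((Matrix.isHermitian_conjTranspose_mul_self A).eigenvalues i)

/-- The multiset of pairwise products of two multisets of reals. -/
noncomputable def mprod (s t : Multiset ℝ) : Multiset ℝ :=
  s.bind fun x => t.map (x * ·)

/-- The `k`-th largest element of a multiset of reals (0-indexed). -/
noncomputable def nthLargest (k : ℕ) (s : Multiset ℝ) : ℝ :=
  ((Multiset.sort s (· ≤ ·)).reverse).getD k 0

lemma svalList_eq_sort {n : Type*} [Fintype n] [DecidableEq n] (A : Matrix n n ℝ) :
    svalList A = (Multiset.sort (svMultiset A) (· ≤ ·)).reverse := rfl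

lemma coe_svalList {n : Type*} [Fintype n] [DecidableEq n] (A : Matrix n n ℝ) :
    (↑(svalList A) : Multiset ℝ) = svMultiset A := by
  rw [svalList_eq_sort, Multiset.coe_reverse, Multiset.sort_eq]

lemma length_svalList {n : Type*} [Fintype n] [DecidableEq n] (A : Matrix n n ℝ) :
    (svalList A).length = Fintype.card n := by
  rw [svalList_eq_sort, List.length_reverse, Multiset.length_sort, svMultiset,
    Multiset.card_map]
  exact Finset.card_univ

lemma sval_eq_nthLargest {n : Type*} [Fintype n] [DecidableEq n] (j : ℕ) (A : Matrix n n ℝ) :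
    sval j A = nthLargest (j - 1) (svMultiset A) := rfl

lemma svalList_sorted {n : Type*} [Fintype n] [DecidableEq n] (A : Matrix n n ℝ) :
    (svalList A).Pairwise (fun x y => y ≤ x) := by
  rw [svalList_eq_sort, List.pairwise_reverse]
  exact Multiset.pairwise_sort _ _

lemma svalList_pos {n : Type*} [Fintype n] [DecidableEq n] (A : Matrix n n ℝ)
    (hA : IsUnit A.det) : ∀ x ∈ svalList A, 0 < x := by
  intro x hx
  have hx' : x ∈ svMultiset A := by
    rw [← coe_svalList]; exact Multiset.mem_coe.mpr hx
  rw [svMultiset, Multiset.mem_map] at hx'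
  obtain ⟨i, _, rfl⟩ := hx'
  apply Real.sqrt_pos.mpr
  rcases (eigenvalues_conjTranspose_mul_self_nonneg A i).lt_or_eq with h | h
  · exact h
  exfalso
  have hdet : (Aᴴ * A).det = A.det * A.det := by
    rw [det_mul, det_conjTranspose]
    simp
  have hprod := (Matrix.isHermitian_conjTranspose_mul_self A).det_eq_prod_eigenvalues
  rw [hdet] at hprod
  have : (A.det * A.det : ℝ) = 0 := by
    rw [hprod]
    exact Finset.prod_eq_zero (Finset.mem_univ i) (by rw [← h]; norm_num)
  exact (hA.mul hA).ne_zero this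

lemma mprod_comm (s t : Multiset ℝ) : mprod s t = mprod t s := by
  unfold mprod
  rw [show (fun x => Multiset.map (x * ·) t) = fun x => t.bind fun y => {x * y} by
        funext x; rw [Multiset.bind_singleton],
      show (fun y => Multiset.map (y * ·) s) = fun y => s.bind fun x => {y * x} by
        funext y; rw [Multiset.bind_singleton]]
  rw [Multiset.bind_bind]
  congr 1; funext y; congr 1; funext x; rw [mul_comm]

lemma conjTranspose_eq_transpose_real {k l : Type*} (A : Matrix k l ℝ) : Aᴴ = Aᵀ := by
  ext i j; simp [conjTranspose_apply]

set_option maxHeartbeats 1000000 in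
/-- The multiset of singular values of a Kronecker product is the multiset of pairwise
products of the singular values of the factors. -/
lemma svMultiset_kronecker {m d : ℕ} (A : Matrix (Fin m) (Fin m) ℝ)
    (B : Matrix (Fin d) (Fin d) ℝ) :
    svMultiset (Matrix.kronecker A B) = mprod (svMultiset A) (svMultiset B) := by
  classical
  set hP := isHermitian_conjTranspose_mul_self A with hPdef
  set hQ := isHermitian_conjTranspose_mul_self B with hQdef
  set U := (hP.eigenvectorUnitary : Matrix (Fin m) (Fin m) ℝ) with hU
  set V := (hQ.eigenvectorUnitary : Matrix (Fin d) (Fin d) ℝ) with hV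
  set μ := hP.eigenvalues with hμ
  set ν := hQ.eigenvalues with hν
  have hsv : svMultiset (Matrix.kronecker A B) =
      (((Matrix.kronecker A B)ᴴ * Matrix.kronecker A B).charpoly.roots).map Real.sqrt := by
    rw [svMultiset, ← eigenvalues_multiset_eq_roots_charpoly
      (isHermitian_conjTranspose_mul_self (Matrix.kronecker A B)), Multiset.map_map]
    rfl
  have hgram : (Matrix.kronecker A B)ᴴ * (Matrix.kronecker A B) =
      Matrix.kronecker (Aᴴ * A) (Bᴴ * B) := by
    rw [conjTranspose_eq_transpose_real, conjTranspose_eq_transpose_real,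
      conjTranspose_eq_transpose_real]
    rw [Matrix.kronecker, ← kroneckerMap_transpose]
    exact (mul_kronecker_mul _ _ _ _).symm
  have hPdec : Aᴴ * A = U * diagonal μ * star U := by
    have := hP.spectral_theorem
    rwa [show (RCLike.ofReal ∘ hP.eigenvalues : Fin m → ℝ) = μ by funext i; simp [hμ]] at this
  have hQdec : Bᴴ * B = V * diagonal ν * star V := by
    have := hQ.spectral_theorem
    rwa [show (RCLike.ofReal ∘ hQ.eigenvalues : Fin d → ℝ) = ν by funext i; simp [hν]] at this
  have hkdec : Matrix.kronecker (Aᴴ * A) (Bᴴ * B) =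
      (Matrix.kronecker U V) * (diagonal fun p : Fin m × Fin d => μ p.1 * ν p.2) *
        (Matrix.kronecker (star U) (star V)) := by
    rw [hPdec, hQdec, Matrix.kronecker, mul_kronecker_mul, mul_kronecker_mul,
      diagonal_kronecker_diagonal]
  have hone : (Matrix.kronecker U V) * (Matrix.kronecker (star U) (star V)) = 1 := by
    rw [Matrix.kronecker, ← mul_kronecker_mul]
    rw [show U * star U = 1 from Unitary.coe_mul_star_self _,
      show V * star V = 1 from Unitary.coe_mul_star_self _]
    exact kroneckerMap_one_one _ (fun b => zero_mul b) (fun a => mul_zero a) (one_mul 1)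
  have hchar : ((Matrix.kronecker A B)ᴴ * (Matrix.kronecker A B)).charpoly =
      (diagonal fun p : Fin m × Fin d => μ p.1 * ν p.2).charpoly := by
    rw [hgram, hkdec]
    exact charpoly_conj_aux _ _ _ hone
  rw [hsv, hchar, roots_charpoly_diagonal_aux, Multiset.map_map]
  show Multiset.map (fun p : Fin m × Fin d => Real.sqrt (μ p.1 * ν p.2)) Finset.univ.val =
    mprod (Multiset.map (fun i => Real.sqrt (μ i)) Finset.univ.val)
          (Multiset.map (fun j => Real.sqrt (ν j)) Finset.univ.val)
  rw [mprod, Multiset.bind_map]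
  simp only [Multiset.map_map]
  rw [show (Finset.univ.val : Multiset (Fin m × Fin d)) = Finset.univ.val ×ˢ Finset.univ.val by
    rw [← Finset.product_val, Finset.univ_product_univ]]
  show Multiset.map _ (Finset.univ.val.bind fun a => (Finset.univ.val.map (Prod.mk a))) = _
  rw [Multiset.map_bind]
  congr 1
  funext i
  rw [Multiset.map_map]
  congr 1
  funext j
  exact Real.sqrt_mul (eigenvalues_conjTranspose_mul_self_nonneg A i) _

lemma sort_decomp (x₀ x₁ x₂ : ℝ) (t : Multiset ℝ) (h10 : x₁ ≤ x₀) (h21 : x₂ ≤ x₁)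
    (ht : ∀ y ∈ t, y ≤ x₂) :
    Multiset.sort (x₀ ::ₘ x₁ ::ₘ x₂ ::ₘ t) (· ≤ ·) =
      Multiset.sort t (· ≤ ·) ++ [x₂, x₁, x₀] := by
  refine (fun hp hs => List.Perm.eq_of_pairwise' (r := fun a b : ℝ => a ≤ b) (Multiset.pairwise_sort _ _) hs hp) ?_ ?_
  · rw [← Multiset.coe_eq_coe]
    rw [Multiset.sort_eq]
    show _ = (↑(Multiset.sort t (· ≤ ·)) + ↑[x₂, x₁, x₀] : Multiset ℝ)
    rw [Multiset.sort_eq]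
    show x₀ ::ₘ x₁ ::ₘ x₂ ::ₘ t = t + (x₂ ::ₘ x₁ ::ₘ x₀ ::ₘ 0)
    rw [Multiset.add_cons, Multiset.add_cons, Multiset.add_cons, add_zero,
      Multiset.cons_swap x₂ x₁, Multiset.cons_swap x₂ x₀, Multiset.cons_swap x₁ x₀]
  · rw [List.pairwise_append]
    refine ⟨Multiset.pairwise_sort _ _, ?_, ?_⟩
    · have h20 := le_trans h21 h10
      refine List.Pairwise.cons ?_ (List.Pairwise.cons ?_ (List.pairwise_singleton _ _))
      · rintro b hb
        simp only [List.mem_cons, List.not_mem_nil, or_false, List.mem_singleton] at hb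
        rcases hb with rfl | rfl
        · exact h21
        · exact h20
      · rintro b hb
        simp only [List.mem_cons, List.not_mem_nil, or_false, List.mem_singleton] at hb
        rcases hb with rfl
        exact h10
    · intro a ha b hb
      have ha' : a ≤ x₂ := ht a ((Multiset.mem_sort _).mp ha)
      simp only [List.mem_cons, List.not_mem_nil, or_false, List.mem_singleton] at hb
      rcases hb with rfl | rfl | rfl
      · exact ha'
      · exact le_trans ha' h21
      · exact le_trans ha' (le_trans h21 h10)

lemma nthLargest_decomp (x₀ x₁ x₂ : ℝ) (t : Multiset ℝ) (h10 : x₁ ≤ x₀) (h21 : x₂ ≤ x₁)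
    (ht : ∀ y ∈ t, y ≤ x₂) :
    nthLargest 1 (x₀ ::ₘ x₁ ::ₘ x₂ ::ₘ t) = x₁ ∧
      nthLargest 2 (x₀ ::ₘ x₁ ::ₘ x₂ ::ₘ t) = x₂ := by
  unfold nthLargest
  rw [sort_decomp x₀ x₁ x₂ t h10 h21 ht]
  simp

lemma key_lemma (a₀ a₁ a₂ b₀ b₁ b₂ : ℝ) (ta tb : List ℝ)
    (h21a : a₂ ≤ a₁) (hta : ∀ x ∈ ta, x ≤ a₂)
    (h10b : b₁ ≤ b₀) (h21b : b₂ ≤ b₁) (htb : ∀ x ∈ tb, x ≤ b₂)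
    (hpa : ∀ x ∈ (a₀ :: a₁ :: a₂ :: ta), (0:ℝ) ≤ x)
    (hpb : ∀ x ∈ (b₀ :: b₁ :: b₂ :: tb), (0:ℝ) ≤ x)
    (hmain : a₁ * b₀ ≤ a₀ * b₁) :
    nthLargest 1 (mprod ↑(a₀ :: a₁ :: a₂ :: ta) ↑(b₀ :: b₁ :: b₂ :: tb)) = a₀ * b₁ ∧
    nthLargest 2 (mprod ↑(a₀ :: a₁ :: a₂ :: ta) ↑(b₀ :: b₁ :: b₂ :: tb))
      = max (a₁ * b₀) (a₀ * b₂) := by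
  have ha₀ : (0:ℝ) ≤ a₀ := hpa _ (by simp)
  have ha₁ : (0:ℝ) ≤ a₁ := hpa _ (by simp)
  have hb₀ : (0:ℝ) ≤ b₀ := hpb _ (by simp)
  set lb : List ℝ := b₀ :: b₁ :: b₂ :: tb with hlb
  set u : Multiset ℝ :=
    Multiset.map (a₀ * ·) ↑tb + Multiset.map (a₁ * ·) ↑(b₁ :: b₂ :: tb) +
      mprod ↑(a₂ :: ta) ↑lb with hu
  have hdecomp : mprod ↑(a₀ :: a₁ :: a₂ :: ta) ↑lb
      = a₀ * b₀ ::ₘ a₀ * b₁ ::ₘ (a₀ * b₂ ::ₘ a₁ * b₀ ::ₘ u) := by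
    simp only [hu, mprod, hlb, ← Multiset.cons_coe, Multiset.cons_bind, Multiset.map_cons]
    simp only [← Multiset.singleton_add]
    abel
  have hlbmem : ∀ w ∈ lb, w ≤ b₀ ∧ 0 ≤ w := by
    intro w hw
    refine ⟨?_, hpb _ hw⟩
    simp only [hlb, List.mem_cons] at hw
    rcases hw with rfl | rfl | rfl | hw
    · exact le_refl _
    · exact h10b
    · exact le_trans h21b h10b
    · exact le_trans (le_trans (htb _ hw) h21b) h10b
  have humem : ∀ y ∈ u, y ≤ max (a₁ * b₀) (a₀ * b₂) := by
    intro y hy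
    rw [hu] at hy
    rcases Multiset.mem_add.mp hy with hy' | hy'
    · rcases Multiset.mem_add.mp hy' with hy'' | hy''
      · rw [Multiset.mem_map] at hy''
        obtain ⟨x, hx, rfl⟩ := hy''
        rw [Multiset.mem_coe] at hx
        exact le_trans (mul_le_mul_of_nonneg_left (htb x hx) ha₀) (le_max_right _ _)
      · rw [Multiset.mem_map] at hy''
        obtain ⟨x, hx, rfl⟩ := hy''
        rw [Multiset.mem_coe] at hx
        have hxb : x ≤ b₀ := by
          simp only [List.mem_cons] at hx
          rcases hx with rfl | rfl | hx
          · exact h10b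
          · exact le_trans h21b h10b
          · exact le_trans (le_trans (htb _ hx) h21b) h10b
        exact le_trans (mul_le_mul_of_nonneg_left hxb ha₁) (le_max_left _ _)
    · rw [mprod, Multiset.mem_bind] at hy'
      obtain ⟨x, hx, hy''⟩ := hy'
      rw [Multiset.mem_map] at hy''
      obtain ⟨w, hw, rfl⟩ := hy''
      rw [Multiset.mem_coe] at hx hw
      have hxa : x ≤ a₁ := by
        simp only [List.mem_cons] at hx
        rcases hx with rfl | hx
        · exact h21a
        · exact le_trans (hta _ hx) h21a
      obtain ⟨hwb, hw0⟩ := hlbmem w hw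
      exact le_trans (mul_le_mul hxa hwb hw0 ha₁) (le_max_left _ _)
  have hswap : (a₀ * b₂ ::ₘ a₁ * b₀ ::ₘ u)
      = max (a₁ * b₀) (a₀ * b₂) ::ₘ min (a₁ * b₀) (a₀ * b₂) ::ₘ u := by
    rcases le_total (a₁ * b₀) (a₀ * b₂) with h | h
    · rw [max_eq_right h, min_eq_left h]
    · rw [max_eq_left h, min_eq_right h, Multiset.cons_swap]
  have h10 : a₀ * b₁ ≤ a₀ * b₀ := mul_le_mul_of_nonneg_left h10b ha₀
  have h21 : max (a₁ * b₀) (a₀ * b₂) ≤ a₀ * b₁ :=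
    max_le hmain (mul_le_mul_of_nonneg_left h21b ha₀)
  have ht : ∀ y ∈ (min (a₁ * b₀) (a₀ * b₂) ::ₘ u), y ≤ max (a₁ * b₀) (a₀ * b₂) := by
    intro y hy
    rcases Multiset.mem_cons.mp hy with rfl | hy
    · exact le_trans (min_le_left _ _) (le_max_left _ _)
    · exact humem y hy
  rw [hdecomp, hswap]
  exact nthLargest_decomp _ _ _ _ h10 h21 ht

lemma final_arith (a₀ a₁ a₂ b₀ b₁ b₂ : ℝ)
    (ha₀ : 0 < a₀) (ha₁ : 0 < a₁) (ha₂ : 0 < a₂) (hb₀ : 0 < b₀) (hb₁ : 0 < b₁) (hb₂ : 0 < b₂)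
    (hmain : a₁ * b₀ ≤ a₀ * b₁) :
    a₀ * b₁ / max (a₁ * b₀) (a₀ * b₂) ≤
        Real.exp |Real.log (a₀ / a₁) - Real.log (b₀ / b₁)| ∧
      min (Real.exp |Real.log (a₀ / a₁) - Real.log (b₀ / b₁)|) (min (a₁ / a₂) (b₁ / b₂)) ≤
        a₀ * b₁ / max (a₁ * b₀) (a₀ * b₂) := by
  have hratio : (0:ℝ) < a₀ * b₁ / (a₁ * b₀) := by positivity
  have hE : Real.exp |Real.log (a₀ / a₁) - Real.log (b₀ / b₁)| = a₀ * b₁ / (a₁ * b₀) := by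
    have hlog : Real.log (a₀ / a₁) - Real.log (b₀ / b₁) = Real.log (a₀ * b₁ / (a₁ * b₀)) := by
      rw [Real.log_div ha₀.ne' ha₁.ne', Real.log_div hb₀.ne' hb₁.ne',
        Real.log_div (by positivity) (by positivity), Real.log_mul ha₀.ne' hb₁.ne',
        Real.log_mul ha₁.ne' hb₀.ne']
      ring
    have hge1 : (1:ℝ) ≤ a₀ * b₁ / (a₁ * b₀) := (one_le_div (by positivity)).mpr hmain
    rw [hlog, abs_of_nonneg (Real.log_nonneg hge1), Real.exp_log hratio]
  constructor
  · rw [hE]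
    gcongr
    · exact le_max_left _ _
  · rcases max_choice (a₁ * b₀) (a₀ * b₂) with h | h <;> rw [h]
    · rw [← hE] at *
      exact le_trans (min_le_left _ _) (le_of_eq hE.symm) |>.trans_eq rfl
    · have : a₀ * b₁ / (a₀ * b₂) = b₁ / b₂ := by
        rw [mul_div_mul_left _ _ ha₀.ne']
      rw [this]
      exact le_trans (min_le_right _ _) (min_le_right _ _)

end Auxiliary

/-- For `A ∈ GL(m, ℝ)`, `B ∈ GL(d, ℝ)` (`m, d ≥ 3`) and the Kronecker
product `A ⊗ B`:
(a) `σ₂(A⊗B)/σ₃(A⊗B) ≤ exp|log(σ₁A/σ₂A) − log(σ₁B/σ₂B)|` and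
(b) `σ₂(A⊗B)/σ₃(A⊗B) ≥ min(exp|log(σ₁A/σ₂A) − log(σ₁B/σ₂B)|, σ₂A/σ₃A, σ₂B/σ₃B)`. -/
theorem kronecker_singular_value_gap
    (m d : ℕ) (hm : 3 ≤ m) (hd : 3 ≤ d)
    (A : Matrix (Fin m) (Fin m) ℝ) (B : Matrix (Fin d) (Fin d) ℝ)
    (hA : IsUnit A.det) (hB : IsUnit B.det) :
    sval 2 (Matrix.kronecker A B) / sval 3 (Matrix.kronecker A B) ≤
        Real.exp |Real.log (sval 1 A / sval 2 A) - Real.log (sval 1 B / sval 2 B)| ∧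
      min (Real.exp |Real.log (sval 1 A / sval 2 A) - Real.log (sval 1 B / sval 2 B)|)
          (min (sval 2 A / sval 3 A) (sval 2 B / sval 3 B)) ≤
        sval 2 (Matrix.kronecker A B) / sval 3 (Matrix.kronecker A B) := by
  classical
  have hlenA : (svalList A).length = m := by rw [length_svalList, Fintype.card_fin]
  have hlenB : (svalList B).length = d := by rw [length_svalList, Fintype.card_fin]
  rcases hLa : svalList A with _ | ⟨a₀, la'⟩
  · rw [hLa] at hlenA; simp at hlenA; omega
  rcases hLa' : la' with _ | ⟨a₁, la''⟩
  · rw [hLa, hLa'] at hlenA; simp at hlenA; omega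
  rcases hLa'' : la'' with _ | ⟨a₂, ta⟩
  · rw [hLa, hLa', hLa''] at hlenA; simp at hlenA; omega
  rcases hLb : svalList B with _ | ⟨b₀, lb'⟩
  · rw [hLb] at hlenB; simp at hlenB; omega
  rcases hLb' : lb' with _ | ⟨b₁, lb''⟩
  · rw [hLb, hLb'] at hlenB; simp at hlenB; omega
  rcases hLb'' : lb'' with _ | ⟨b₂, tb⟩
  · rw [hLb, hLb', hLb''] at hlenB; simp at hlenB; omega
  have hA3 : svalList A = a₀ :: a₁ :: a₂ :: ta := by rw [hLa, hLa', hLa'']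
  have hB3 : svalList B = b₀ :: b₁ :: b₂ :: tb := by rw [hLb, hLb', hLb'']
  -- sortedness
  have hsA := svalList_sorted A
  rw [hA3] at hsA
  obtain ⟨hA0, hsA⟩ := List.pairwise_cons.mp hsA
  obtain ⟨hA1, hsA⟩ := List.pairwise_cons.mp hsA
  obtain ⟨hA2, _⟩ := List.pairwise_cons.mp hsA
  have hsB := svalList_sorted B
  rw [hB3] at hsB
  obtain ⟨hB0, hsB⟩ := List.pairwise_cons.mp hsB
  obtain ⟨hB1, hsB⟩ := List.pairwise_cons.mp hsB
  obtain ⟨hB2, _⟩ := List.pairwise_cons.mp hsB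
  -- positivity
  have hposA : ∀ x ∈ (a₀ :: a₁ :: a₂ :: ta), (0:ℝ) < x := by
    intro x hx; exact svalList_pos A hA x (hA3 ▸ hx)
  have hposB : ∀ x ∈ (b₀ :: b₁ :: b₂ :: tb), (0:ℝ) < x := by
    intro x hx; exact svalList_pos B hB x (hB3 ▸ hx)
  have ha₀ : (0:ℝ) < a₀ := hposA _ (by simp)
  have ha₁ : (0:ℝ) < a₁ := hposA _ (by simp)
  have ha₂ : (0:ℝ) < a₂ := hposA _ (by simp)
  have hb₀ : (0:ℝ) < b₀ := hposB _ (by simp)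
  have hb₁ : (0:ℝ) < b₁ := hposB _ (by simp)
  have hb₂ : (0:ℝ) < b₂ := hposB _ (by simp)
  -- identify the singular values
  have hv1A : sval 1 A = a₀ := by simp [sval, hA3]
  have hv2A : sval 2 A = a₁ := by simp [sval, hA3]
  have hv3A : sval 3 A = a₂ := by simp [sval, hA3]
  have hv1B : sval 1 B = b₀ := by simp [sval, hB3]
  have hv2B : sval 2 B = b₁ := by simp [sval, hB3]
  have hv3B : sval 3 B = b₂ := by simp [sval, hB3]
  have hk : svMultiset (Matrix.kronecker A B)
      = mprod ↑(a₀ :: a₁ :: a₂ :: ta) ↑(b₀ :: b₁ :: b₂ :: tb) := by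
    rw [svMultiset_kronecker, ← coe_svalList, ← coe_svalList, hA3, hB3]
  have h21a : a₂ ≤ a₁ := hA1 _ (by simp)
  have h10a : a₁ ≤ a₀ := hA0 _ (by simp)
  have h21b : b₂ ≤ b₁ := hB1 _ (by simp)
  have h10b : b₁ ≤ b₀ := hB0 _ (by simp)
  have hta : ∀ x ∈ ta, x ≤ a₂ := fun x hx => hA2 x hx
  have htb : ∀ x ∈ tb, x ≤ b₂ := fun x hx => hB2 x hx
  have hs2 : sval 2 (Matrix.kronecker A B)
      = nthLargest 1 (svMultiset (Matrix.kronecker A B)) := rfl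
  have hs3 : sval 3 (Matrix.kronecker A B)
      = nthLargest 2 (svMultiset (Matrix.kronecker A B)) := rfl
  rcases le_total (a₁ * b₀) (a₀ * b₁) with hc | hc
  · obtain ⟨h2, h3⟩ := key_lemma a₀ a₁ a₂ b₀ b₁ b₂ ta tb h21a hta h10b h21b htb
      (fun x hx => (hposA x hx).le) (fun x hx => (hposB x hx).le) hc
    rw [hs2, hs3, hk, h2, h3, hv1A, hv2A, hv3A, hv1B, hv2B, hv3B]
    exact final_arith a₀ a₁ a₂ b₀ b₁ b₂ ha₀ ha₁ ha₂ hb₀ hb₁ hb₂ hc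
  · have hc' : b₁ * a₀ ≤ b₀ * a₁ := by linarith [hc]
    obtain ⟨h2, h3⟩ := key_lemma b₀ b₁ b₂ a₀ a₁ a₂ tb ta h21b htb h10a h21a hta
      (fun x hx => (hposB x hx).le) (fun x hx => (hposA x hx).le) hc'
    have hk' : svMultiset (Matrix.kronecker A B)
        = mprod ↑(b₀ :: b₁ :: b₂ :: tb) ↑(a₀ :: a₁ :: a₂ :: ta) := by
      rw [hk, mprod_comm]
    rw [hs2, hs3, hk', h2, h3, hv1A, hv2A, hv3A, hv1B, hv2B, hv3B]
    have := final_arith b₀ b₁ b₂ a₀ a₁ a₂ hb₀ hb₁ hb₂ ha₀ ha₁ ha₂ hc'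
    rw [abs_sub_comm (Real.log (b₀ / b₁)) (Real.log (a₀ / a₁)),
      min_comm (b₁ / b₂) (a₁ / a₂)] at this
    exact this
end
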